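/- arXiv:2001.10986 — 3 statements merged into one kernel-verified Lean document; each statement's English description precedes it below -/
import Mathlib

section
/- Let {X_i}_{i∈I} be a finite measurable partition of X with μ(X_i) > 0 for each i, K_i := K restricted to X_i×Y, μ_i := μ restricted to X_i, and let 𝒥 be a partition of the index set I. Suppose π = Σ_{i∈I} (u_i⊗v_i)·K_i and π' = Σ_{i∈I} (u'_i⊗v'_i)·K_i, with all scaling functions in L^∞₊, satisfy: P_X(π restricted to X_i×Y) = P_X(π' restricted to X_i×Y) = μ_i for every i ∈ I; for every J ∈ 𝒥, Σ_{i∈J} P_Y(π' restricted to X_i×Y) = Σ_{i∈J} P_Y(π restricted to X_i×Y); and v'_i = v'_j ν-a.e. whenever i, j ∈ J for some J ∈ 𝒥. Then KL(π|K) − KL(π'|K) = KL(π|π'). -/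
open MeasureTheory ENNReal Filter Topology

noncomputable section

/-- `phi s = s * log s - s + 1` (note `phi 0 = 1` since `Real.log 0 = 0`);
this is the integrand of the Kullback--Leibler divergence. -/
def phi (s : ℝ) : ℝ := s * Real.log s - s + 1

open Classical in
/-- Kullback--Leibler divergence `KL(ρ|σ) ∈ [0,∞]`: `∫ phi (dρ/dσ) dσ` if `ρ ≪ σ`,
and `∞` otherwise (nonnegativity of `ρ` is automatic for measures). -/
def KL {Z : Type*} [MeasurableSpace Z] (ρ σ : Measure Z) : ℝ≥0∞ :=
  if ρ ≪ σ then ∫⁻ z, ENNReal.ofReal (phi ((ρ.rnDeriv σ) z).toReal) ∂σ else ⊤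

/-- The set `Π(μh, νh)` of transport plans with marginals `μh` and `νh`. -/
def Coupling {X Y : Type*} [MeasurableSpace X] [MeasurableSpace Y]
    (μh : Measure X) (νh : Measure Y) : Set (Measure (X × Y)) :=
  {π | π.map Prod.fst = μh ∧ π.map Prod.snd = νh}

/-- The Gibbs kernel measure `K = exp(-c/ε) ⋅ (μ ⊗ ν)`. -/
def Kmeas {X Y : Type*} [MeasurableSpace X] [MeasurableSpace Y]
    (μ : Measure X) (ν : Measure Y) [SFinite ν] (c : X × Y → ℝ) (ε : ℝ) : Measure (X × Y) :=
  (μ.prod ν).withDensity fun p => ENNReal.ofReal (Real.exp (-c p / ε))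

/-- The product density `(u ⊗ v)(x,y) = u x * v y`, as an `ℝ≥0∞`-valued density. -/
def prodDensity {X Y : Type*} (u : X → ℝ) (v : Y → ℝ) : X × Y → ℝ≥0∞ :=
  fun p => ENNReal.ofReal (u p.1 * v p.2)

/-- `L^∞₊(μ)`: measurable, a.e. nonnegative, essentially bounded functions. -/
def LinftyPlus {Z : Type*} [MeasurableSpace Z] (μ : Measure Z) (u : Z → ℝ) : Prop :=
  Measurable u ∧ (∀ᵐ z ∂μ, 0 ≤ u z) ∧ ∃ C : ℝ, ∀ᵐ z ∂μ, u z ≤ C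


lemma phi_nonneg {s : ℝ} (hs : 0 ≤ s) : 0 ≤ phi s := by
  rcases eq_or_lt_of_le hs with h | h
  · simp [phi, ← h]
  · have h1 : Real.log s⁻¹ ≤ s⁻¹ - 1 := Real.log_le_sub_one_of_pos (by positivity)
    rw [Real.log_inv] at h1
    have h2 : 1 - s⁻¹ ≤ Real.log s := by linarith
    have h3 : s * (1 - s⁻¹) ≤ s * Real.log s := by
      exact mul_le_mul_of_nonneg_left h2 h.le
    have h4 : s * (1 - s⁻¹) = s - 1 := by field_simp
    unfold phi; nlinarith

lemma phi_decomp {f f' : ℝ} (hf : 0 ≤ f) (hf' : 0 ≤ f') (h : f' = 0 → f = 0) :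
    phi f = f' * phi (f / f') + phi f' + (f - f') * Real.log f' := by
  rcases eq_or_lt_of_le hf' with h0 | h0
  · have hf0 : f = 0 := h h0.symm
    simp [phi, hf0, ← h0]
  rcases eq_or_lt_of_le hf with h1 | h1
  · simp only [phi, ← h1, zero_div]
    simp [Real.log_zero]; ring
  · have hlog : Real.log (f / f') = Real.log f - Real.log f' :=
      Real.log_div (ne_of_gt h1) (ne_of_gt h0)
    unfold phi
    rw [hlog]
    field_simp
    ring

/-- bound for `phi` and `t * log t` on `[0, C]`. -/
lemma exists_bound_mul_log (C : ℝ) :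
    ∃ M : ℝ, 0 ≤ M ∧ (∀ t, 0 ≤ t → t ≤ C → |t * Real.log t| ≤ M) ∧
      (∀ t, 0 ≤ t → t ≤ C → |phi t| ≤ M + C + 1) := by
  obtain ⟨M, hM⟩ := (isCompact_Icc : IsCompact (Set.Icc (0:ℝ) C)).exists_bound_of_continuousOn
    Real.continuous_mul_log.continuousOn
  refine ⟨max M 0, le_max_right _ _, fun t ht htC => ?_, fun t ht htC => ?_⟩
  · exact le_trans (hM t ⟨ht, htC⟩) (le_max_left _ _)
  · have h1 : |t * Real.log t| ≤ max M 0 := le_trans (hM t ⟨ht, htC⟩) (le_max_left _ _)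
    unfold phi
    have : |t * Real.log t - t + 1| ≤ |t * Real.log t| + t + 1 := by
      have := abs_nonneg (t * Real.log t)
      rw [abs_le]; constructor <;> [skip; skip] <;> cases abs_le.mp (le_refl |t * Real.log t - t + 1|) <;> nlinarith [le_abs_self (t * Real.log t), neg_abs_le (t * Real.log t)]
    linarith

lemma ae_prod_fst {α β : Type*} [MeasurableSpace α] [MeasurableSpace β]
    {μ : Measure α} {ν : Measure β} [SFinite μ] [SFinite ν] [IsFiniteMeasure ν] {P : α → Prop}
    (h : ∀ᵐ x ∂μ, P x) : ∀ᵐ p ∂(μ.prod ν), P p.1 := by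
  rw [ae_iff] at h ⊢
  refine measure_mono_null (fun p hp => ?_)
    (?_ : (μ.prod ν) ((toMeasurable μ {x | ¬ P x}) ×ˢ Set.univ) = 0)
  · exact ⟨subset_toMeasurable _ _ hp, trivial⟩
  · rw [Measure.prod_prod, measure_toMeasurable, h, zero_mul]

lemma ae_prod_snd {α β : Type*} [MeasurableSpace α] [MeasurableSpace β]
    {μ : Measure α} {ν : Measure β} [SFinite μ] [SFinite ν] [IsFiniteMeasure μ] {P : β → Prop}
    (h : ∀ᵐ y ∂ν, P y) : ∀ᵐ p ∂(μ.prod ν), P p.2 := by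
  rw [ae_iff] at h ⊢
  refine measure_mono_null (fun p hp => ?_)
    (?_ : (μ.prod ν) (Set.univ ×ˢ (toMeasurable ν {y | ¬ P y})) = 0)
  · exact ⟨trivial, subset_toMeasurable _ _ hp⟩
  · rw [Measure.prod_prod, measure_toMeasurable, h, mul_zero]

lemma map_fst_withDensity_prod {α β : Type*} [MeasurableSpace α] [MeasurableSpace β]
    (μ : Measure α) (ν : Measure β) [SFinite μ] [SFinite ν] {h : α × β → ℝ≥0∞}
    (hh : Measurable h) :
    ((μ.prod ν).withDensity h).map Prod.fst = μ.withDensity (fun x => ∫⁻ y, h (x, y) ∂ν) := by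
  ext s hs
  rw [Measure.map_apply measurable_fst hs, withDensity_apply _ (measurable_fst hs),
    withDensity_apply _ hs]
  have : Prod.fst ⁻¹' s = s ×ˢ (Set.univ : Set β) := by ext p; simp
  rw [this, ← Measure.prod_restrict s Set.univ, Measure.restrict_univ,
    lintegral_prod _ hh.aemeasurable]

lemma map_snd_withDensity_prod {α β : Type*} [MeasurableSpace α] [MeasurableSpace β]
    (μ : Measure α) (ν : Measure β) [SFinite μ] [SFinite ν] {h : α × β → ℝ≥0∞}
    (hh : Measurable h) :
    ((μ.prod ν).withDensity h).map Prod.snd = ν.withDensity (fun y => ∫⁻ x, h (x, y) ∂μ) := by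
  ext s hs
  rw [Measure.map_apply measurable_snd hs, withDensity_apply _ (measurable_snd hs),
    withDensity_apply _ hs]
  have : Prod.snd ⁻¹' s = (Set.univ : Set α) ×ˢ s := by ext p; simp
  rw [this, ← Measure.prod_restrict Set.univ s, Measure.restrict_univ,
    lintegral_prod_symm _ hh.aemeasurable]

lemma withDensity_finset_sum {Z ι : Type*} [MeasurableSpace Z] (μ : Measure Z) (s : Finset ι)
    {g : ι → Z → ℝ≥0∞} (hg : ∀ i, Measurable (g i)) :
    μ.withDensity (fun z => ∑ i ∈ s, g i z) = ∑ i ∈ s, μ.withDensity (g i) := by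
  classical
  induction s using Finset.induction_on with
  | empty => simp
  | @insert a t hns ih =>
    have h1 : (fun z => ∑ i ∈ insert a t, g i z) = (g a) + (fun z => ∑ i ∈ t, g i z) := by
      funext z; simp [Finset.sum_insert hns]
    rw [Finset.sum_insert hns, ← ih, h1, withDensity_add_left (hg a)]

lemma measurable_phi : Measurable phi :=
  ((measurable_id.mul Real.measurable_log).sub measurable_id).add measurable_const

lemma kl_pythagoras {Z : Type*} [MeasurableSpace Z] (K : Measure Z) [IsFiniteMeasure K]
    {f f' : Z → ℝ} (hf : Measurable f) (hf' : Measurable f')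
    {C : ℝ} (hC : 1 ≤ C)
    (hf0 : ∀ᵐ z ∂K, 0 ≤ f z) (hfC : ∀ᵐ z ∂K, f z ≤ C)
    (hf0' : ∀ᵐ z ∂K, 0 ≤ f' z) (hfC' : ∀ᵐ z ∂K, f' z ≤ C)
    (habs : ∀ᵐ z ∂K, f' z = 0 → f z = 0)
    (hInt : Integrable (fun z => f z * Real.log (f' z)) K)
    (heq : ∫ z, f z * Real.log (f' z) ∂K = ∫ z, f' z * Real.log (f' z) ∂K) :
    KL (K.withDensity fun z => ENNReal.ofReal (f z)) K
      = KL (K.withDensity fun z => ENNReal.ofReal (f z))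
          (K.withDensity fun z => ENNReal.ofReal (f' z))
        + KL (K.withDensity fun z => ENNReal.ofReal (f' z)) K := by
  have hmf : Measurable fun z => ENNReal.ofReal (f z) := ENNReal.measurable_ofReal.comp hf
  have hmf' : Measurable fun z => ENNReal.ofReal (f' z) := ENNReal.measurable_ofReal.comp hf'
  set π := K.withDensity fun z => ENNReal.ofReal (f z) with hπdef
  set π' := K.withDensity fun z => ENNReal.ofReal (f' z) with hπ'def
  set G : Z → ℝ≥0∞ := fun z => ENNReal.ofReal (f z) / ENNReal.ofReal (f' z) with hGdef
  have hG : Measurable G := hmf.div hmf'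
  haveI : IsFiniteMeasure π' := by
    apply isFiniteMeasure_withDensity
    have hb : ∫⁻ a, ENNReal.ofReal (f' a) ∂K ≤ ∫⁻ _, ENNReal.ofReal C ∂K :=
      lintegral_mono_ae (by filter_upwards [hfC'] with z hz using ENNReal.ofReal_le_ofReal hz)
    refine ne_top_of_le_ne_top ?_ hb
    rw [lintegral_const]
    exact ENNReal.mul_ne_top ofReal_ne_top (measure_ne_top K _)
  have hππ' : π = π'.withDensity G := by
    rw [hπ'def, ← withDensity_mul K hmf' hG]
    apply withDensity_congr_ae
    filter_upwards [habs, hf0'] with z hz hz0'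
    by_cases h0 : f' z = 0
    · simp [hz h0, h0]
    · have h1 : ENNReal.ofReal (f' z) ≠ 0 := by
        simp only [ne_eq, ENNReal.ofReal_eq_zero, not_le]
        exact lt_of_le_of_ne hz0' (Ne.symm h0)
      simp only [Pi.mul_apply]
      rw [mul_comm, ENNReal.div_mul_cancel h1 ofReal_ne_top]
  have hac1 : π ≪ K := withDensity_absolutelyContinuous K _
  have hac2 : π' ≪ K := withDensity_absolutelyContinuous K _
  have hac3 : π ≪ π' := hππ' ▸ withDensity_absolutelyContinuous π' G
  have h1 : π.rnDeriv K =ᵐ[K] fun z => ENNReal.ofReal (f z) :=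
    Measure.rnDeriv_withDensity K hmf
  have h2 : π'.rnDeriv K =ᵐ[K] fun z => ENNReal.ofReal (f' z) :=
    Measure.rnDeriv_withDensity K hmf'
  have h3 : π.rnDeriv π' =ᵐ[π'] G := by
    rw [hππ']; exact Measure.rnDeriv_withDensity π' hG
  obtain ⟨M, hM0, hMlog, hMphi⟩ := exists_bound_mul_log C
  -- integrabilities
  have hIntphi : Integrable (fun z => phi (f z)) K := by
    refine (integrable_const (M + C + 1)).mono'
      ((measurable_phi.comp hf).aestronglyMeasurable) ?_
    filter_upwards [hf0, hfC] with z h0 h1 using hMphi _ h0 h1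
  have hIntphi' : Integrable (fun z => phi (f' z)) K := by
    refine (integrable_const (M + C + 1)).mono'
      ((measurable_phi.comp hf').aestronglyMeasurable) ?_
    filter_upwards [hf0', hfC'] with z h0 h1 using hMphi _ h0 h1
  have hIntf'log : Integrable (fun z => f' z * Real.log (f' z)) K := by
    refine (integrable_const M).mono'
      ((hf'.mul (Real.measurable_log.comp hf')).aestronglyMeasurable) ?_
    filter_upwards [hf0', hfC'] with z h0 h1 using hMlog _ h0 h1
  have hIntcross : Integrable (fun z => (f z - f' z) * Real.log (f' z)) K := by
    refine (hInt.sub hIntf'log).congr (Eventually.of_forall fun z => by simp only [Pi.sub_apply]; ring)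
  have hkey : (fun z => f' z * phi (f z / f' z)) =ᵐ[K]
      fun z => phi (f z) - phi (f' z) - (f z - f' z) * Real.log (f' z) := by
    filter_upwards [hf0, hf0', habs] with z h0 h0' hz
    have := phi_decomp h0 h0' hz
    linarith
  have hIntmid : Integrable (fun z => f' z * phi (f z / f' z)) K :=
    ((hIntphi.sub hIntphi').sub hIntcross).congr hkey.symm
  -- converting the three lintegrals
  have e1 : ∫⁻ z, ENNReal.ofReal (phi ((π.rnDeriv K) z).toReal) ∂K
      = ENNReal.ofReal (∫ z, phi (f z) ∂K) := by
    rw [ofReal_integral_eq_lintegral_ofReal hIntphi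
      (by filter_upwards [hf0] with z h0 using phi_nonneg h0)]
    apply lintegral_congr_ae
    filter_upwards [h1, hf0] with z hz h0
    rw [hz, ENNReal.toReal_ofReal h0]
  have e3 : ∫⁻ z, ENNReal.ofReal (phi ((π'.rnDeriv K) z).toReal) ∂K
      = ENNReal.ofReal (∫ z, phi (f' z) ∂K) := by
    rw [ofReal_integral_eq_lintegral_ofReal hIntphi'
      (by filter_upwards [hf0'] with z h0 using phi_nonneg h0)]
    apply lintegral_congr_ae
    filter_upwards [h2, hf0'] with z hz h0
    rw [hz, ENNReal.toReal_ofReal h0]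
  have e2 : ∫⁻ z, ENNReal.ofReal (phi ((π.rnDeriv π') z).toReal) ∂π'
      = ENNReal.ofReal (∫ z, f' z * phi (f z / f' z) ∂K) := by
    have step1 : ∫⁻ z, ENNReal.ofReal (phi ((π.rnDeriv π') z).toReal) ∂π'
        = ∫⁻ z, ENNReal.ofReal (phi ((G z).toReal)) ∂π' := by
      apply lintegral_congr_ae
      filter_upwards [h3] with z hz
      rw [hz]
    have hmeas2 : Measurable fun z => ENNReal.ofReal (phi ((G z).toReal)) :=
      ENNReal.measurable_ofReal.comp (measurable_phi.comp hG.ennreal_toReal)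
    rw [step1, hπ'def, lintegral_withDensity_eq_lintegral_mul K hmf' hmeas2,
      ofReal_integral_eq_lintegral_ofReal hIntmid
        (by filter_upwards [hf0, hf0'] with z h0 h0' using
          mul_nonneg h0' (phi_nonneg (div_nonneg h0 h0')))]
    apply lintegral_congr_ae
    filter_upwards [hf0, hf0'] with z h0 h0'
    simp only [Pi.mul_apply]
    rw [ENNReal.ofReal_mul h0']
    congr 2
    rw [hGdef]
    simp only []
    rw [ENNReal.toReal_div, ENNReal.toReal_ofReal h0, ENNReal.toReal_ofReal h0']
  -- the real identity
  have hzero : ∫ z, (f z - f' z) * Real.log (f' z) ∂K = 0 := by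
    have : (fun z => (f z - f' z) * Real.log (f' z))
        = fun z => f z * Real.log (f' z) - f' z * Real.log (f' z) := by
      funext z; ring
    rw [this, integral_sub hInt hIntf'log, heq, sub_self]
  have hIntsum : Integrable (fun z => f' z * phi (f z / f' z) + phi (f' z)) K :=
    hIntmid.add hIntphi'
  have hreal : ∫ z, phi (f z) ∂K
      = ∫ z, f' z * phi (f z / f' z) ∂K + ∫ z, phi (f' z) ∂K := by
    have h4 : ∫ z, phi (f z) ∂K
        = ∫ z, ((f' z * phi (f z / f' z) + phi (f' z)) + (f z - f' z) * Real.log (f' z)) ∂K := by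
      apply integral_congr_ae
      filter_upwards [hf0, hf0', habs] with z h0 h0' hz using phi_decomp h0 h0' hz
    rw [h4, integral_add hIntsum hIntcross, hzero, add_zero, integral_add hIntmid hIntphi']
  have hB0 : 0 ≤ ∫ z, f' z * phi (f z / f' z) ∂K := by
    apply integral_nonneg_of_ae
    filter_upwards [hf0, hf0'] with z h0 h0' using
      mul_nonneg h0' (phi_nonneg (div_nonneg h0 h0'))
  have hC0 : 0 ≤ ∫ z, phi (f' z) ∂K := by
    apply integral_nonneg_of_ae
    filter_upwards [hf0'] with z h0 using phi_nonneg h0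
  rw [KL, KL, KL, if_pos hac1, if_pos hac3, if_pos hac2, e1, e2, e3,
    hreal, ENNReal.ofReal_add hB0 hC0]

lemma marginal_gives_lower {X Y : Type*} [MeasurableSpace X] [MeasurableSpace Y]
    (μ : Measure X) (ν : Measure Y) [IsProbabilityMeasure μ] [IsProbabilityMeasure ν]
    {k : X × Y → ℝ} (hkm : Measurable k) (hk0 : ∀ p, 0 ≤ k p) (hk1 : ∀ p, k p ≤ 1)
    {A : Set X} (hA : MeasurableSet A)
    {u : X → ℝ} (hum : Measurable u) {vv : Y → ℝ} (hvm : Measurable vv)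
    {C : ℝ} (hC0 : 0 < C) (hv0 : ∀ᵐ y ∂ν, 0 ≤ vv y) (hvC : ∀ᵐ y ∂ν, vv y ≤ C)
    (hmarg : ((μ.prod ν).withDensity (fun p => ENNReal.ofReal (k p) *
        ENNReal.ofReal ((A ×ˢ Set.univ).indicator (fun q : X × Y => u q.1 * vv q.2) p))).map
        Prod.fst = μ.restrict A) :
    ∀ᵐ x ∂μ, x ∈ A → 1 / C ≤ u x := by
  have hsm : Measurable fun p : X × Y => u p.1 * vv p.2 :=
    (hum.comp measurable_fst).mul (hvm.comp measurable_snd)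
  have hdm : Measurable fun p : X × Y => ENNReal.ofReal (k p) *
      ENNReal.ofReal ((A ×ˢ Set.univ).indicator (fun q : X × Y => u q.1 * vv q.2) p) :=
    (hkm.ennreal_ofReal).mul ((hsm.indicator (hA.prod MeasurableSet.univ)).ennreal_ofReal)
  rw [map_fst_withDensity_prod μ ν hdm] at hmarg
  have hrestr : μ.restrict A = μ.withDensity (A.indicator 1) := (withDensity_indicator_one hA).symm
  rw [hrestr] at hmarg
  have him : Measurable fun x => ∫⁻ y, ENNReal.ofReal (k (x, y)) *
      ENNReal.ofReal ((A ×ˢ Set.univ).indicator (fun q : X × Y => u q.1 * vv q.2) (x, y)) ∂ν := by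
    apply Measurable.lintegral_prod_right
    exact hdm
  have hfin : ∫⁻ x, (A.indicator 1 : X → ℝ≥0∞) x ∂μ ≠ ⊤ := by
    rw [lintegral_indicator_one hA]
    exact measure_ne_top μ A
  have hae : (A.indicator 1 : X → ℝ≥0∞) =ᵐ[μ] fun x => ∫⁻ y, ENNReal.ofReal (k (x, y)) *
      ENNReal.ofReal ((A ×ˢ Set.univ).indicator (fun q : X × Y => u q.1 * vv q.2) (x, y)) ∂ν := by
    rw [← withDensity_eq_iff ((measurable_one.indicator hA).aemeasurable) him.aemeasurable hfin]
    exact hmarg.symm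
  filter_upwards [hae] with x hx hxA
  rw [Set.indicator_of_mem hxA] at hx
  simp only [Pi.one_apply] at hx
  -- `1 = ∫⁻ y, ...`, and the integrand is bounded by `ofReal (max (u x) 0 * C)`
  have hb : (∫⁻ y, ENNReal.ofReal (k (x, y)) *
      ENNReal.ofReal ((A ×ˢ Set.univ).indicator (fun q : X × Y => u q.1 * vv q.2) (x, y)) ∂ν)
      ≤ ENNReal.ofReal (max (u x) 0 * C) := by
    have hmono : ∀ᵐ y ∂ν, ENNReal.ofReal (k (x, y)) *
        ENNReal.ofReal ((A ×ˢ Set.univ).indicator (fun q : X × Y => u q.1 * vv q.2) (x, y))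
        ≤ ENNReal.ofReal (max (u x) 0 * C) := by
      filter_upwards [hv0, hvC] with y h0 h1
      have hk' : ENNReal.ofReal (k (x, y)) ≤ 1 := by
        rw [← ENNReal.ofReal_one]
        exact ENNReal.ofReal_le_ofReal (hk1 _)
      have hin : (A ×ˢ Set.univ).indicator (fun q : X × Y => u q.1 * vv q.2) (x, y)
          ≤ max (u x) 0 * C := by
        by_cases hmem : (x, y) ∈ A ×ˢ (Set.univ : Set Y)
        · rw [Set.indicator_of_mem hmem]
          calc u x * vv y ≤ max (u x) 0 * vv y := by
                apply mul_le_mul_of_nonneg_right (le_max_left _ _) h0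
            _ ≤ max (u x) 0 * C := by
                apply mul_le_mul_of_nonneg_left h1 (le_max_right _ _)
        · rw [Set.indicator_of_notMem hmem]; positivity
      calc ENNReal.ofReal (k (x, y)) * ENNReal.ofReal _ ≤
            1 * ENNReal.ofReal (max (u x) 0 * C) :=
          mul_le_mul' hk' (ENNReal.ofReal_le_ofReal hin)
        _ = ENNReal.ofReal (max (u x) 0 * C) := one_mul _
    calc _ ≤ ∫⁻ _, ENNReal.ofReal (max (u x) 0 * C) ∂ν := lintegral_mono_ae hmono
      _ = ENNReal.ofReal (max (u x) 0 * C) := by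
        rw [lintegral_const, measure_univ, mul_one]
  have h1C : (1 : ℝ) ≤ max (u x) 0 * C := by
    exact ENNReal.one_le_ofReal.mp (hx ▸ hb)
  rcases le_or_gt 0 (u x) with h | h
  · rw [max_eq_left h] at h1C
    rw [div_le_iff₀ hC0]
    linarith [mul_comm (u x) C]
  · rw [max_eq_right h.le] at h1C
    simp at h1C
    linarith

lemma sum_indicator_disjoint {X ι M : Type*} [Fintype ι] [AddCommMonoid M]
    {Xc : ι → Set X} (hXd : ∀ i j, i ≠ j → Disjoint (Xc i) (Xc j))
    {Y : Type*} (h : ι → X × Y → M) (p : X × Y) {i₀ : ι} (hp : p.1 ∈ Xc i₀) :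
    ∑ i, ((Xc i ×ˢ (Set.univ : Set Y)).indicator (h i)) p
      = (Xc i₀ ×ˢ (Set.univ : Set Y)).indicator (h i₀) p := by
  apply Finset.sum_eq_single
  · intro j _ hj
    apply Set.indicator_of_notMem
    intro hmem
    exact Set.disjoint_left.mp (hXd j i₀ hj) hmem.1 hp
  · intro hn; exact absurd (Finset.mem_univ _) hn

set_option maxHeartbeats 1000000 in
/-- Lemma 3.4, first part: decrement identity. If `π` and `π'`
are plans built from scaled kernels over a basic partition, with equal
`X`-marginals `μᵢ` on each basic cell, equal summed `Y`-marginals on each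
composite cell (fibers of `q`), and `v'`-factors constant on composite cells,
then `KL(π|K) − KL(π'|K) = KL(π|π')`, stated additively. -/
theorem decrement_eq_kl
    {X Y : Type*} [MetricSpace X] [CompactSpace X] [MeasurableSpace X] [BorelSpace X]
    [MetricSpace Y] [CompactSpace Y] [MeasurableSpace Y] [BorelSpace Y]
    (μ : Measure X) (ν : Measure Y) [IsProbabilityMeasure μ] [IsProbabilityMeasure ν]
    (c : X × Y → ℝ) (hc : Measurable c) (cmax : ℝ)
    (hc0 : ∀ p, 0 ≤ c p) (hcmax : ∀ p, c p ≤ cmax)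
    (ε : ℝ) (hε : 0 < ε)
    {ι κ : Type*} [Fintype ι] [Fintype κ] [DecidableEq κ]
    (Xc : ι → Set X) (hXm : ∀ i, MeasurableSet (Xc i))
    (hXd : ∀ i j, i ≠ j → Disjoint (Xc i) (Xc j)) (hXu : (⋃ i, Xc i) = Set.univ)
    (hpos : ∀ i, 0 < μ (Xc i))
    (q : ι → κ)
    (u u' : ι → X → ℝ) (v v' : ι → Y → ℝ)
    (hu : ∀ i, LinftyPlus μ (u i)) (hv : ∀ i, LinftyPlus ν (v i))
    (hu' : ∀ i, LinftyPlus μ (u' i)) (hv' : ∀ i, LinftyPlus ν (v' i))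
    (πi πi' : ι → Measure (X × Y))
    (hπidef : ∀ i, πi i =
      ((Kmeas μ ν c ε).restrict (Xc i ×ˢ Set.univ)).withDensity (prodDensity (u i) (v i)))
    (hπidef' : ∀ i, πi' i =
      ((Kmeas μ ν c ε).restrict (Xc i ×ˢ Set.univ)).withDensity (prodDensity (u' i) (v' i)))
    (π π' : Measure (X × Y)) (hπ : π = ∑ i, πi i) (hπ' : π' = ∑ i, πi' i)
    (hX : ∀ i, (πi i).map Prod.fst = μ.restrict (Xc i))
    (hX' : ∀ i, (πi' i).map Prod.fst = μ.restrict (Xc i))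
    (hY : ∀ J : κ,
      (∑ i ∈ Finset.univ.filter fun i => q i = J, (πi' i).map Prod.snd) =
      (∑ i ∈ Finset.univ.filter fun i => q i = J, (πi i).map Prod.snd))
    (hvconst : ∀ i j, q i = q j → v' i =ᵐ[ν] v' j) :
    KL π (Kmeas μ ν c ε) = KL π π' + KL π' (Kmeas μ ν c ε) := by
  classical
  -- kernel density basics
  set k : X × Y → ℝ := fun p => Real.exp (-c p / ε) with hk_def
  have hkm : Measurable k := Real.measurable_exp.comp ((hc.neg).div_const ε)
  have hk0 : ∀ p, 0 < k p := fun p => Real.exp_pos _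
  have hk1 : ∀ p, k p ≤ 1 := fun p =>
    Real.exp_le_one_iff.mpr (div_nonpos_iff.mpr (Or.inr ⟨neg_nonpos.mpr (hc0 p), hε.le⟩))
  set κ0 : ℝ := Real.exp (-cmax / ε) with hκ0_def
  have hκ0pos : 0 < κ0 := Real.exp_pos _
  have hκ0le : ∀ p, κ0 ≤ k p := by
    intro p
    exact Real.exp_le_exp.mpr ((div_le_div_iff_of_pos_right hε).mpr (by linarith [hcmax p]))
  set ρ : Measure (X × Y) := μ.prod ν with hρ_def
  set K : Measure (X × Y) := Kmeas μ ν c ε with hK_def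
  have hKρ : K = ρ.withDensity (fun p => ENNReal.ofReal (k p)) := rfl
  haveI hfinK : IsFiniteMeasure K := by
    rw [hKρ]
    apply isFiniteMeasure_withDensity
    refine ne_top_of_le_ne_top ?_ (lintegral_mono fun p => ENNReal.ofReal_le_one.mpr (hk1 p))
    simp [lintegral_const]
  -- index machinery
  have hι : Nonempty ι := by
    by_contra hcon
    rw [not_nonempty_iff] at hcon
    have h1 : (Set.univ : Set X) = ∅ := by rw [← hXu]; exact Set.iUnion_of_empty _
    have h2 := measure_univ (μ := μ)
    rw [h1] at h2
    simp at h2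
  have hexi : ∀ x : X, ∃ i, x ∈ Xc i := fun x => Set.mem_iUnion.mp (hXu.symm ▸ Set.mem_univ x)
  have huniq : ∀ {x : X} {i j : ι}, x ∈ Xc i → x ∈ Xc j → i = j := by
    intro x i j hi hj
    by_contra hne
    exact Set.disjoint_left.mp (hXd i j hne) hi hj
  -- constants
  choose Cu hCu using fun i => (hu i).2.2
  choose Cv hCv using fun i => (hv i).2.2
  choose Cu' hCu' using fun i => (hu' i).2.2
  choose Cv' hCv' using fun i => (hv' i).2.2
  set C : ℝ := 1 + ∑ i, (|Cu i| + |Cv i| + |Cu' i| + |Cv' i|) with hC_def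
  have hsum_nonneg : (0:ℝ) ≤ ∑ i, (|Cu i| + |Cv i| + |Cu' i| + |Cv' i|) :=
    Finset.sum_nonneg fun i _ => by positivity
  have hC1 : (1:ℝ) ≤ C := by rw [hC_def]; linarith
  have hC0 : (0:ℝ) < C := by linarith
  have hterm_le : ∀ i, |Cu i| + |Cv i| + |Cu' i| + |Cv' i| ≤ C - 1 := by
    intro i
    have h : |Cu i| + |Cv i| + |Cu' i| + |Cv' i|
        ≤ ∑ j, (|Cu j| + |Cv j| + |Cu' j| + |Cv' j|) :=
      Finset.single_le_sum (f := fun j => |Cu j| + |Cv j| + |Cu' j| + |Cv' j|)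
        (fun j _ => by positivity) (Finset.mem_univ i)
    rw [hC_def]; linarith
  have hCu_le : ∀ i, Cu i ≤ C := fun i => by
    have h := hterm_le i
    have h1 := le_abs_self (Cu i); have h2 := abs_nonneg (Cv i)
    have h3 := abs_nonneg (Cu' i); have h4 := abs_nonneg (Cv' i)
    linarith
  have hCv_le : ∀ i, Cv i ≤ C := fun i => by
    have h := hterm_le i
    have h1 := le_abs_self (Cv i); have h2 := abs_nonneg (Cu i)
    have h3 := abs_nonneg (Cu' i); have h4 := abs_nonneg (Cv' i)
    linarith
  have hCu'_le : ∀ i, Cu' i ≤ C := fun i => by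
    have h := hterm_le i
    have h1 := le_abs_self (Cu' i); have h2 := abs_nonneg (Cu i)
    have h3 := abs_nonneg (Cv i); have h4 := abs_nonneg (Cv' i)
    linarith
  have hCv'_le : ∀ i, Cv' i ≤ C := fun i => by
    have h := hterm_le i
    have h1 := le_abs_self (Cv' i); have h2 := abs_nonneg (Cu i)
    have h3 := abs_nonneg (Cv i); have h4 := abs_nonneg (Cu' i)
    linarith
  have hu_ae : ∀ i, ∀ᵐ x ∂μ, 0 ≤ u i x ∧ u i x ≤ C := fun i => by
    filter_upwards [(hu i).2.1, hCu i] with x h1 h2; exact ⟨h1, h2.trans (hCu_le i)⟩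
  have hu'_ae : ∀ i, ∀ᵐ x ∂μ, 0 ≤ u' i x ∧ u' i x ≤ C := fun i => by
    filter_upwards [(hu' i).2.1, hCu' i] with x h1 h2; exact ⟨h1, h2.trans (hCu'_le i)⟩
  have hv_ae : ∀ i, ∀ᵐ y ∂ν, 0 ≤ v i y ∧ v i y ≤ C := fun i => by
    filter_upwards [(hv i).2.1, hCv i] with y h1 h2; exact ⟨h1, h2.trans (hCv_le i)⟩
  have hv'_ae : ∀ i, ∀ᵐ y ∂ν, 0 ≤ v' i y ∧ v' i y ≤ C := fun i => by
    filter_upwards [(hv' i).2.1, hCv' i] with y h1 h2; exact ⟨h1, h2.trans (hCv'_le i)⟩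
  -- densities
  set s : ι → X × Y → ℝ :=
    fun i p => (Xc i ×ˢ (Set.univ : Set Y)).indicator (fun q => u i q.1 * v i q.2) p with hs_def
  set s' : ι → X × Y → ℝ :=
    fun i p => (Xc i ×ˢ (Set.univ : Set Y)).indicator (fun q => u' i q.1 * v' i q.2) p with hs'_def
  set f : X × Y → ℝ := fun p => ∑ i, s i p with hf_def
  set f' : X × Y → ℝ := fun p => ∑ i, s' i p with hf'_def
  have hcellm : ∀ i, MeasurableSet (Xc i ×ˢ (Set.univ : Set Y)) :=
    fun i => (hXm i).prod MeasurableSet.univ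
  have hsm : ∀ i, Measurable (s i) := fun i =>
    (((hu i).1.comp measurable_fst).mul ((hv i).1.comp measurable_snd)).indicator (hcellm i)
  have hs'm : ∀ i, Measurable (s' i) := fun i =>
    (((hu' i).1.comp measurable_fst).mul ((hv' i).1.comp measurable_snd)).indicator (hcellm i)
  have hfm : Measurable f := Finset.measurable_sum _ (fun i _ => hsm i)
  have hf'm : Measurable f' := Finset.measurable_sum _ (fun i _ => hs'm i)
  have hs_eval : ∀ i (p : X × Y), p.1 ∈ Xc i → s i p = u i p.1 * v i p.2 := by
    intro i p hp
    simp only [hs_def]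
    exact Set.indicator_of_mem (Set.mem_prod.mpr ⟨hp, Set.mem_univ _⟩) _
  have hs'_eval : ∀ i (p : X × Y), p.1 ∈ Xc i → s' i p = u' i p.1 * v' i p.2 := by
    intro i p hp
    simp only [hs'_def]
    exact Set.indicator_of_mem (Set.mem_prod.mpr ⟨hp, Set.mem_univ _⟩) _
  have hcollapse : ∀ (p : X × Y) (i : ι), p.1 ∈ Xc i → f p = s i p := by
    intro p i hp
    simp only [hf_def, hs_def]
    exact sum_indicator_disjoint hXd _ p hp
  have hcollapse' : ∀ (p : X × Y) (i : ι), p.1 ∈ Xc i → f' p = s' i p := by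
    intro p i hp
    simp only [hf'_def, hs'_def]
    exact sum_indicator_disjoint hXd _ p hp
  have hof : ∀ i (p : X × Y), ENNReal.ofReal (s i p)
      = (Xc i ×ˢ (Set.univ : Set Y)).indicator
        (fun q : X × Y => ENNReal.ofReal (u i q.1 * v i q.2)) p := by
    intro i p
    by_cases hmem : p ∈ Xc i ×ˢ (Set.univ : Set Y)
    · rw [hs_def]
      simp only [Set.indicator_of_mem hmem]
    · rw [hs_def]
      simp only [Set.indicator_of_notMem hmem, ENNReal.ofReal_zero]
  have hof' : ∀ i (p : X × Y), ENNReal.ofReal (s' i p)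
      = (Xc i ×ˢ (Set.univ : Set Y)).indicator
        (fun q : X × Y => ENNReal.ofReal (u' i q.1 * v' i q.2)) p := by
    intro i p
    by_cases hmem : p ∈ Xc i ×ˢ (Set.univ : Set Y)
    · rw [hs'_def]
      simp only [Set.indicator_of_mem hmem]
    · rw [hs'_def]
      simp only [Set.indicator_of_notMem hmem, ENNReal.ofReal_zero]
  -- measure representations
  have hπiK : ∀ i, πi i = K.withDensity (fun p => ENNReal.ofReal (s i p)) := by
    intro i
    rw [hπidef i, ← withDensity_indicator (hcellm i)]
    congr 1
    funext p
    rw [hof i p]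
    rfl
  have hπ'iK : ∀ i, πi' i = K.withDensity (fun p => ENNReal.ofReal (s' i p)) := by
    intro i
    rw [hπidef' i, ← withDensity_indicator (hcellm i)]
    congr 1
    funext p
    rw [hof' i p]
    rfl
  set ℓ : ι → X × Y → ℝ≥0∞ :=
    fun i p => ENNReal.ofReal (k p) * ENNReal.ofReal (s i p) with hℓ_def
  set ℓ' : ι → X × Y → ℝ≥0∞ :=
    fun i p => ENNReal.ofReal (k p) * ENNReal.ofReal (s' i p) with hℓ'_def
  have hℓm : ∀ i, Measurable (ℓ i) := fun i => hkm.ennreal_ofReal.mul (hsm i).ennreal_ofReal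
  have hℓ'm : ∀ i, Measurable (ℓ' i) := fun i => hkm.ennreal_ofReal.mul (hs'm i).ennreal_ofReal
  have hπiρ : ∀ i, πi i = ρ.withDensity (ℓ i) := by
    intro i
    rw [hπiK i, hKρ, ← withDensity_mul ρ hkm.ennreal_ofReal (hsm i).ennreal_ofReal]
    rfl
  have hπ'iρ : ∀ i, πi' i = ρ.withDensity (ℓ' i) := by
    intro i
    rw [hπ'iK i, hKρ, ← withDensity_mul ρ hkm.ennreal_ofReal (hs'm i).ennreal_ofReal]
    rfl
  have hπK : π = K.withDensity (fun p => ENNReal.ofReal (f p)) := by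
    rw [hπ, show (∑ i, πi i) = ∑ i, K.withDensity (fun p => ENNReal.ofReal (s i p)) from
      Finset.sum_congr rfl (fun i _ => hπiK i),
      ← withDensity_finset_sum K Finset.univ (fun i => (hsm i).ennreal_ofReal)]
    apply withDensity_congr_ae
    apply Eventually.of_forall
    intro p
    obtain ⟨i, hi⟩ := hexi p.1
    show (∑ j, ENNReal.ofReal (s j p)) = ENNReal.ofReal (f p)
    rw [hcollapse p i hi]
    calc ∑ j, ENNReal.ofReal (s j p)
        = ∑ j, (Xc j ×ˢ (Set.univ : Set Y)).indicator
            (fun q : X × Y => ENNReal.ofReal (u j q.1 * v j q.2)) p := by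
          exact Finset.sum_congr rfl (fun j _ => hof j p)
      _ = (Xc i ×ˢ (Set.univ : Set Y)).indicator
            (fun q : X × Y => ENNReal.ofReal (u i q.1 * v i q.2)) p :=
          sum_indicator_disjoint hXd _ p hi
      _ = ENNReal.ofReal (s i p) := (hof i p).symm
  have hπ'K : π' = K.withDensity (fun p => ENNReal.ofReal (f' p)) := by
    rw [hπ', show (∑ i, πi' i) = ∑ i, K.withDensity (fun p => ENNReal.ofReal (s' i p)) from
      Finset.sum_congr rfl (fun i _ => hπ'iK i),
      ← withDensity_finset_sum K Finset.univ (fun i => (hs'm i).ennreal_ofReal)]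
    apply withDensity_congr_ae
    apply Eventually.of_forall
    intro p
    obtain ⟨i, hi⟩ := hexi p.1
    show (∑ j, ENNReal.ofReal (s' j p)) = ENNReal.ofReal (f' p)
    rw [hcollapse' p i hi]
    calc ∑ j, ENNReal.ofReal (s' j p)
        = ∑ j, (Xc j ×ˢ (Set.univ : Set Y)).indicator
            (fun q : X × Y => ENNReal.ofReal (u' j q.1 * v' j q.2)) p := by
          exact Finset.sum_congr rfl (fun j _ => hof' j p)
      _ = (Xc i ×ˢ (Set.univ : Set Y)).indicator
            (fun q : X × Y => ENNReal.ofReal (u' i q.1 * v' i q.2)) p :=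
          sum_indicator_disjoint hXd _ p hi
      _ = ENNReal.ofReal (s' i p) := (hof' i p).symm
  -- finiteness of the pieces
  have hπi_univ : ∀ i, πi i Set.univ = μ (Xc i) := by
    intro i
    have h1 : ((πi i).map Prod.fst) Set.univ = πi i Set.univ := by
      rw [Measure.map_apply measurable_fst MeasurableSet.univ, Set.preimage_univ]
    rw [← h1, hX i, Measure.restrict_apply_univ]
  have hπ'i_univ : ∀ i, πi' i Set.univ = μ (Xc i) := by
    intro i
    have h1 : ((πi' i).map Prod.fst) Set.univ = πi' i Set.univ := by
      rw [Measure.map_apply measurable_fst MeasurableSet.univ, Set.preimage_univ]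
    rw [← h1, hX' i, Measure.restrict_apply_univ]
  have hfinπi : ∀ i, IsFiniteMeasure (πi i) := by
    intro i
    constructor
    rw [hπi_univ i]
    exact measure_lt_top μ _
  have hfinπ'i : ∀ i, IsFiniteMeasure (πi' i) := by
    intro i
    constructor
    rw [hπ'i_univ i]
    exact measure_lt_top μ _
  -- lower bounds on u, u' over the cells
  have hulow : ∀ i, ∀ᵐ x ∂μ, x ∈ Xc i → 1 / C ≤ u i x := by
    intro i
    refine marginal_gives_lower μ ν hkm (fun p => (hk0 p).le) hk1 (hXm i) (hu i).1 (hv i).1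
      hC0 (hv i).2.1 ((hv_ae i).mono fun y hy => hy.2) ?_
    have h1 := hX i
    rw [hπiρ i] at h1
    exact h1
  have hu'low : ∀ i, ∀ᵐ x ∂μ, x ∈ Xc i → 1 / C ≤ u' i x := by
    intro i
    refine marginal_gives_lower μ ν hkm (fun p => (hk0 p).le) hk1 (hXm i) (hu' i).1 (hv' i).1
      hC0 (hv' i).2.1 ((hv'_ae i).mono fun y hy => hy.2) ?_
    have h1 := hX' i
    rw [hπ'iρ i] at h1
    exact h1
  -- w and the comparison constants
  set w : κ → Y → ℝ := fun J => if h : ∃ i, q i = J then v' h.choose else 0 with hw_def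
  have hwm : ∀ J, Measurable (w J) := by
    intro J
    rw [hw_def]
    by_cases h : ∃ i, q i = J
    · simp only [dif_pos h]; exact (hv' _).1
    · simp only [dif_neg h]; exact measurable_const
  have hw_eq : ∀ i, v' i =ᵐ[ν] w (q i) := by
    intro i
    have hex : ∃ j, q j = q i := ⟨i, rfl⟩
    rw [hw_def]
    simp only [dif_pos hex]
    exact hvconst i hex.choose hex.choose_spec.symm
  set b : ι → Y → ℝ≥0∞ := fun i y => ∫⁻ x, ℓ i (x, y) ∂μ with hb_def
  set b' : ι → Y → ℝ≥0∞ := fun i y => ∫⁻ x, ℓ' i (x, y) ∂μ with hb'_def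
  have hbm : ∀ i, Measurable (b i) := fun i => Measurable.lintegral_prod_left (hℓm i)
  have hb'm : ∀ i, Measurable (b' i) := fun i => Measurable.lintegral_prod_left (hℓ'm i)
  have hmapsnd : ∀ i, (πi i).map Prod.snd = ν.withDensity (b i) := fun i => by
    rw [hπiρ i]; exact map_snd_withDensity_prod μ ν (hℓm i)
  have hmapsnd' : ∀ i, (πi' i).map Prod.snd = ν.withDensity (b' i) := fun i => by
    rw [hπ'iρ i]; exact map_snd_withDensity_prod μ ν (hℓ'm i)
  have hbint : ∀ i, ∫⁻ y, b i y ∂ν = μ (Xc i) := by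
    intro i
    have h1 : (ν.withDensity (b i)) Set.univ = μ (Xc i) := by
      rw [← hmapsnd i, Measure.map_apply measurable_snd MeasurableSet.univ, Set.preimage_univ,
        hπi_univ i]
    rw [← h1, withDensity_apply _ MeasurableSet.univ, Measure.restrict_univ]
  have hb'int : ∀ i, ∫⁻ y, b' i y ∂ν = μ (Xc i) := by
    intro i
    have h1 : (ν.withDensity (b' i)) Set.univ = μ (Xc i) := by
      rw [← hmapsnd' i, Measure.map_apply measurable_snd MeasurableSet.univ, Set.preimage_univ,
        hπ'i_univ i]
    rw [← h1, withDensity_apply _ MeasurableSet.univ, Measure.restrict_univ]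
  have hYsum : ∀ J : κ, ∀ᵐ y ∂ν, (∑ i ∈ Finset.univ.filter fun i => q i = J, b' i y)
      = ∑ i ∈ Finset.univ.filter fun i => q i = J, b i y := by
    intro J
    have h1 := hY J
    simp only [hmapsnd, hmapsnd'] at h1
    rw [← withDensity_finset_sum ν _ (fun i => hb'm i),
      ← withDensity_finset_sum ν _ (fun i => hbm i)] at h1
    have hfin : ∫⁻ y, (∑ i ∈ Finset.univ.filter fun i => q i = J, b' i y) ∂ν ≠ ⊤ := by
      rw [lintegral_finset_sum _ (fun i _ => hb'm i)]
      refine (ENNReal.sum_lt_top.mpr (fun i _ => ?_)).ne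
      rw [hb'int i]
      exact measure_lt_top μ _
    exact (withDensity_eq_iff
      (Finset.measurable_sum _ (fun i _ => hb'm i)).aemeasurable
      (Finset.measurable_sum _ (fun i _ => hbm i)).aemeasurable hfin).mp h1
  set cc : ι → ℝ := fun i => (κ0 / C) * (μ (Xc i)).toReal / ((Fintype.card ι : ℝ) * C)
    with hcc_def
  have hcard_pos : (0:ℝ) < (Fintype.card ι : ℝ) := by
    exact_mod_cast Fintype.card_pos_iff.mpr hι
  have hccpos : ∀ i, 0 < cc i := by
    intro i
    have h1 : 0 < (μ (Xc i)).toReal := ENNReal.toReal_pos (hpos i).ne' (measure_ne_top μ _)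
    rw [hcc_def]
    positivity
  have hvw : ∀ i, ∀ᵐ y ∂ν, cc i * v i y ≤ w (q i) y := by
    intro i
    filter_upwards [hYsum (q i), hv_ae i, ae_all_iff.mpr (fun j : ι => hw_eq j),
      ae_all_iff.mpr (fun j : ι => hv'_ae j)] with y h1 h2 h3 h4
    -- lower bound for b i y
    have hlow : ENNReal.ofReal ((κ0 / C) * v i y) * μ (Xc i) ≤ b i y := by
      have e1 : ENNReal.ofReal ((κ0 / C) * v i y) * μ (Xc i)
          = ∫⁻ _x in Xc i, ENNReal.ofReal ((κ0 / C) * v i y) ∂μ :=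
        (setLIntegral_const _ _).symm
      have hgy : Measurable fun x => ℓ i (x, y) :=
        (hℓm i).comp (measurable_id.prodMk measurable_const)
      have hmono : ∀ᵐ x ∂μ, x ∈ Xc i → ENNReal.ofReal ((κ0 / C) * v i y) ≤ ℓ i (x, y) := by
        filter_upwards [hulow i, hu_ae i] with x hx1 hx2 hxA
        have h5 : 1 / C ≤ u i x := hx1 hxA
        have h6 : 0 ≤ v i y := h2.1
        have hs1 : s i (x, y) = u i x * v i y := hs_eval i (x, y) hxA
        show ENNReal.ofReal ((κ0 / C) * v i y)
          ≤ ENNReal.ofReal (k (x, y)) * ENNReal.ofReal (s i (x, y))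
        calc ENNReal.ofReal ((κ0 / C) * v i y)
            ≤ ENNReal.ofReal (κ0 * (u i x * v i y)) := by
              apply ENNReal.ofReal_le_ofReal
              have m2 := mul_le_mul_of_nonneg_left
                (mul_le_mul_of_nonneg_right h5 h6) hκ0pos.le
              calc (κ0 / C) * v i y = κ0 * (1 / C * v i y) := by ring
                _ ≤ κ0 * (u i x * v i y) := m2
          _ = ENNReal.ofReal κ0 * ENNReal.ofReal (u i x * v i y) :=
              ENNReal.ofReal_mul hκ0pos.le
          _ ≤ ENNReal.ofReal (k (x, y)) * ENNReal.ofReal (s i (x, y)) := by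
              rw [hs1]
              exact mul_le_mul_left (ENNReal.ofReal_le_ofReal (hκ0le _)) _
      calc ENNReal.ofReal ((κ0 / C) * v i y) * μ (Xc i)
          = ∫⁻ _x in Xc i, ENNReal.ofReal ((κ0 / C) * v i y) ∂μ := e1
        _ ≤ ∫⁻ x in Xc i, ℓ i (x, y) ∂μ :=
            setLIntegral_mono_ae (hgy.aemeasurable.restrict) hmono
        _ ≤ ∫⁻ x, ℓ i (x, y) ∂μ := setLIntegral_le_lintegral _ _
    have hw0 : 0 ≤ w (q i) y := by rw [← h3 i]; exact (h4 i).1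
    -- upper bound for b' j y for j in the fiber
    have hup : ∀ j ∈ Finset.univ.filter (fun j => q j = q i), b' j y
        ≤ ENNReal.ofReal (C * w (q i) y) := by
      intro j hj
      have hqj : q j = q i := (Finset.mem_filter.mp hj).2
      have hv'y : v' j y = w (q i) y := by rw [← hqj]; exact h3 j
      have hmono : ∀ᵐ x ∂μ, ℓ' j (x, y) ≤ ENNReal.ofReal (C * w (q i) y) := by
        filter_upwards [hu'_ae j] with x hx
        show ENNReal.ofReal (k (x, y)) * ENNReal.ofReal (s' j (x, y))
          ≤ ENNReal.ofReal (C * w (q i) y)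
        by_cases hxA : x ∈ Xc j
        · rw [hs'_eval j (x, y) hxA, hv'y]
          calc ENNReal.ofReal (k (x, y)) * ENNReal.ofReal (u' j x * w (q i) y)
              ≤ 1 * ENNReal.ofReal (C * w (q i) y) := by
                apply mul_le_mul'
                · rw [← ENNReal.ofReal_one]; exact ENNReal.ofReal_le_ofReal (hk1 _)
                · exact ENNReal.ofReal_le_ofReal (mul_le_mul_of_nonneg_right hx.2 hw0)
            _ = ENNReal.ofReal (C * w (q i) y) := one_mul _
        · have hz : s' j (x, y) = 0 := by
            simp only [hs'_def]
            exact Set.indicator_of_notMem (fun hm => hxA hm.1) _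
          rw [hz]
          simp
      calc b' j y ≤ ∫⁻ _x, ENNReal.ofReal (C * w (q i) y) ∂μ := lintegral_mono_ae hmono
        _ = ENNReal.ofReal (C * w (q i) y) := by rw [lintegral_const, measure_univ, mul_one]
    -- combine
    have hchain : ENNReal.ofReal ((κ0 / C) * v i y) * μ (Xc i)
        ≤ (Fintype.card ι : ℝ≥0∞) * ENNReal.ofReal (C * w (q i) y) := by
      calc ENNReal.ofReal ((κ0 / C) * v i y) * μ (Xc i) ≤ b i y := hlow
        _ ≤ ∑ j ∈ Finset.univ.filter (fun j => q j = q i), b j y :=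
            Finset.single_le_sum (f := fun j => b j y) (fun j _ => zero_le)
              (by simp : i ∈ Finset.univ.filter (fun j => q j = q i))
        _ = ∑ j ∈ Finset.univ.filter (fun j => q j = q i), b' j y := h1.symm
        _ ≤ ∑ _j ∈ Finset.univ.filter (fun j => q j = q i), ENNReal.ofReal (C * w (q i) y) :=
            Finset.sum_le_sum hup
        _ = ((Finset.univ.filter (fun j => q j = q i)).card : ℝ≥0∞)
              * ENNReal.ofReal (C * w (q i) y) := by
            rw [Finset.sum_const, nsmul_eq_mul]
        _ ≤ (Fintype.card ι : ℝ≥0∞) * ENNReal.ofReal (C * w (q i) y) := by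
            apply mul_le_mul_left
            exact_mod_cast Nat.cast_le.mpr
              (le_trans (Finset.card_filter_le _ _) (le_of_eq Finset.card_univ))
    have hne : (Fintype.card ι : ℝ≥0∞) * ENNReal.ofReal (C * w (q i) y) ≠ ⊤ :=
      ENNReal.mul_ne_top (ENNReal.natCast_ne_top _) ofReal_ne_top
    have hreal := ENNReal.toReal_mono hne hchain
    rw [ENNReal.toReal_mul, ENNReal.toReal_mul,
      ENNReal.toReal_ofReal (mul_nonneg (by positivity) h2.1),
      ENNReal.toReal_ofReal (mul_nonneg hC0.le hw0)] at hreal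
    have htop : ((Fintype.card ι : ℝ≥0∞)).toReal = (Fintype.card ι : ℝ) := by simp
    rw [htop] at hreal
    show ((κ0 / C) * (μ (Xc i)).toReal / ((Fintype.card ι : ℝ) * C)) * v i y ≤ w (q i) y
    rw [div_mul_eq_mul_div, div_le_iff₀ (by positivity)]
    linarith [hreal]
  -- master bundle of a.e. facts
  have hbxs : ∀ᵐ x ∂μ, ∀ i, (0 ≤ u i x ∧ u i x ≤ C) ∧ (0 ≤ u' i x ∧ u' i x ≤ C)
      ∧ (x ∈ Xc i → 1 / C ≤ u i x) ∧ (x ∈ Xc i → 1 / C ≤ u' i x) := by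
    rw [ae_all_iff]
    intro i
    filter_upwards [hu_ae i, hu'_ae i, hulow i, hu'low i] with x h1 h2 h3 h4
    exact ⟨h1, h2, h3, h4⟩
  have hbys : ∀ᵐ y ∂ν, ∀ i, (0 ≤ v i y ∧ v i y ≤ C) ∧ (0 ≤ v' i y ∧ v' i y ≤ C)
      ∧ v' i y = w (q i) y ∧ cc i * v i y ≤ w (q i) y := by
    rw [ae_all_iff]
    intro i
    filter_upwards [hv_ae i, hv'_ae i, hw_eq i, hvw i] with y h1 h2 h3 h4
    exact ⟨h1, h2, h3, h4⟩
  have hbundleρ : ∀ᵐ p ∂ρ,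
      (∀ i, (0 ≤ u i p.1 ∧ u i p.1 ≤ C) ∧ (0 ≤ u' i p.1 ∧ u' i p.1 ≤ C)
        ∧ (p.1 ∈ Xc i → 1 / C ≤ u i p.1) ∧ (p.1 ∈ Xc i → 1 / C ≤ u' i p.1))
      ∧ (∀ i, (0 ≤ v i p.2 ∧ v i p.2 ≤ C) ∧ (0 ≤ v' i p.2 ∧ v' i p.2 ≤ C)
        ∧ v' i p.2 = w (q i) p.2 ∧ cc i * v i p.2 ≤ w (q i) p.2) :=
    (ae_prod_fst hbxs).and (ae_prod_snd hbys)
  have hacK : K ≪ ρ := hKρ ▸ withDensity_absolutelyContinuous ρ _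
  have hbundleK := hbundleρ.filter_mono hacK.ae_le
  -- bounds for f, f'
  have hb_f0 : ∀ᵐ p ∂K, 0 ≤ f p := by
    filter_upwards [hbundleK] with p hb
    obtain ⟨i, hi⟩ := hexi p.1
    rw [hcollapse p i hi, hs_eval i p hi]
    exact mul_nonneg (hb.1 i).1.1 (hb.2 i).1.1
  have hb_fC : ∀ᵐ p ∂K, f p ≤ C * C := by
    filter_upwards [hbundleK] with p hb
    obtain ⟨i, hi⟩ := hexi p.1
    rw [hcollapse p i hi, hs_eval i p hi]
    exact mul_le_mul (hb.1 i).1.2 (hb.2 i).1.2 (hb.2 i).1.1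
      (le_trans (hb.1 i).1.1 (hb.1 i).1.2)
  have hb_f0' : ∀ᵐ p ∂K, 0 ≤ f' p := by
    filter_upwards [hbundleK] with p hb
    obtain ⟨i, hi⟩ := hexi p.1
    rw [hcollapse' p i hi, hs'_eval i p hi]
    exact mul_nonneg (hb.1 i).2.1.1 (hb.2 i).2.1.1
  have hb_fC' : ∀ᵐ p ∂K, f' p ≤ C * C := by
    filter_upwards [hbundleK] with p hb
    obtain ⟨i, hi⟩ := hexi p.1
    rw [hcollapse' p i hi, hs'_eval i p hi]
    exact mul_le_mul (hb.1 i).2.1.2 (hb.2 i).2.1.2 (hb.2 i).2.1.1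
      (le_trans (hb.1 i).2.1.1 (hb.1 i).2.1.2)
  have hb_abs : ∀ᵐ p ∂K, f' p = 0 → f p = 0 := by
    filter_upwards [hbundleK] with p hb h0
    obtain ⟨i, hi⟩ := hexi p.1
    rw [hcollapse' p i hi, hs'_eval i p hi] at h0
    rw [hcollapse p i hi, hs_eval i p hi]
    have hu'1 : 1 / C ≤ u' i p.1 := (hb.1 i).2.2.2 hi
    have hv'0 : v' i p.2 = 0 := by
      rcases mul_eq_zero.mp h0 with h | h
      · exfalso
        have hpos1 : (0:ℝ) < 1 / C := by positivity
        rw [h] at hu'1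
        linarith
      · exact h
    have hw0 : w (q i) p.2 = 0 := by rw [← (hb.2 i).2.2.1, hv'0]
    have hv0 : v i p.2 = 0 := by
      have h4 := (hb.2 i).2.2.2
      rw [hw0] at h4
      have h5 := (hb.2 i).1.1
      have h6 : v i p.2 ≤ 0 := by nlinarith [hccpos i]
      linarith
    rw [hv0, mul_zero]
  -- integrability battery
  obtain ⟨M, hM0, hMlog, hMphi⟩ := exists_bound_mul_log C
  set L : X × Y → ℝ := fun p => Real.log (f' p) with hL_def
  have haeπ : ∀ i, ∀ᵐ p ∂(πi i), p.1 ∈ Xc i ∧ 0 < v i p.2 ∧ v i p.2 ≤ C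
      ∧ 1 / C ≤ u' i p.1 ∧ u' i p.1 ≤ C ∧ 0 < w (q i) p.2 ∧ w (q i) p.2 ≤ C
      ∧ f' p = u' i p.1 * w (q i) p.2 ∧ cc i * v i p.2 ≤ w (q i) p.2 ∧ u i p.1 ≤ C := by
    intro i
    rw [hπiρ i, ae_withDensity_iff (hℓm i)]
    filter_upwards [hbundleρ] with p hb hne
    have hs0 : 0 < s i p := by
      rcases lt_trichotomy (s i p) 0 with h | h | h
      · exact absurd (show ENNReal.ofReal (k p) * ENNReal.ofReal (s i p) = 0 by
          rw [ENNReal.ofReal_eq_zero.mpr h.le, mul_zero]) hne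
      · exact absurd (show ENNReal.ofReal (k p) * ENNReal.ofReal (s i p) = 0 by
          rw [h, ENNReal.ofReal_zero, mul_zero]) hne
      · exact h
    have hmem : p.1 ∈ Xc i := by
      by_contra hcon
      have hz : s i p = 0 := by
        simp only [hs_def]
        exact Set.indicator_of_notMem (fun hm => hcon hm.1) _
      rw [hz] at hs0; exact lt_irrefl 0 hs0
    have hse : s i p = u i p.1 * v i p.2 := hs_eval i p hmem
    have hv0 : 0 < v i p.2 := by
      rcases (hb.2 i).1.1.lt_or_eq with h | h
      · exact h
      · exfalso; rw [hse, ← h, mul_zero] at hs0; exact lt_irrefl 0 hs0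
    have hwpos : 0 < w (q i) p.2 :=
      lt_of_lt_of_le (mul_pos (hccpos i) hv0) (hb.2 i).2.2.2
    have hwC : w (q i) p.2 ≤ C := by
      rw [← (hb.2 i).2.2.1]; exact (hb.2 i).2.1.2
    have hf'e : f' p = u' i p.1 * w (q i) p.2 := by
      rw [hcollapse' p i hmem, hs'_eval i p hmem, (hb.2 i).2.2.1]
    exact ⟨hmem, hv0, (hb.2 i).1.2, (hb.1 i).2.2.2 hmem, (hb.1 i).2.1.2, hwpos, hwC, hf'e,
      (hb.2 i).2.2.2, (hb.1 i).1.2⟩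
  have haeπ' : ∀ i, ∀ᵐ p ∂(πi' i), p.1 ∈ Xc i ∧ 1 / C ≤ u' i p.1 ∧ u' i p.1 ≤ C
      ∧ 0 < w (q i) p.2 ∧ w (q i) p.2 ≤ C ∧ f' p = u' i p.1 * w (q i) p.2 := by
    intro i
    rw [hπ'iρ i, ae_withDensity_iff (hℓ'm i)]
    filter_upwards [hbundleρ] with p hb hne
    have hs0 : 0 < s' i p := by
      rcases lt_trichotomy (s' i p) 0 with h | h | h
      · exact absurd (show ENNReal.ofReal (k p) * ENNReal.ofReal (s' i p) = 0 by
          rw [ENNReal.ofReal_eq_zero.mpr h.le, mul_zero]) hne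
      · exact absurd (show ENNReal.ofReal (k p) * ENNReal.ofReal (s' i p) = 0 by
          rw [h, ENNReal.ofReal_zero, mul_zero]) hne
      · exact h
    have hmem : p.1 ∈ Xc i := by
      by_contra hcon
      have hz : s' i p = 0 := by
        simp only [hs'_def]
        exact Set.indicator_of_notMem (fun hm => hcon hm.1) _
      rw [hz] at hs0; exact lt_irrefl 0 hs0
    have hse : s' i p = u' i p.1 * v' i p.2 := hs'_eval i p hmem
    have hv'0 : 0 < v' i p.2 := by
      rcases (hb.2 i).2.1.1.lt_or_eq with h | h
      · exact h
      · exfalso; rw [hse, ← h, mul_zero] at hs0; exact lt_irrefl 0 hs0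
    have hwpos : 0 < w (q i) p.2 := (hb.2 i).2.2.1 ▸ hv'0
    have hwC : w (q i) p.2 ≤ C := by
      rw [← (hb.2 i).2.2.1]; exact (hb.2 i).2.1.2
    have hf'e : f' p = u' i p.1 * w (q i) p.2 := by
      rw [hcollapse' p i hmem, hs'_eval i p hmem, (hb.2 i).2.2.1]
    exact ⟨hmem, (hb.1 i).2.2.2 hmem, (hb.1 i).2.1.2, hwpos, hwC, hf'e⟩
  have hIa : ∀ i, Integrable (fun p : X × Y => Real.log (u' i p.1)) (πi i) := by
    intro i
    haveI := hfinπi i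
    refine (integrable_const (Real.log C)).mono'
      ((Real.measurable_log.comp ((hu' i).1.comp measurable_fst)).aestronglyMeasurable) ?_
    filter_upwards [haeπ i] with p hp
    obtain ⟨-, -, -, h1, h2, -⟩ := hp
    rw [Real.norm_eq_abs, abs_le]
    constructor
    · have hlog := Real.log_le_log (by positivity) h1
      rw [one_div, Real.log_inv] at hlog
      linarith
    · exact Real.log_le_log (lt_of_lt_of_le (by positivity) h1) h2
  have hIa' : ∀ i, Integrable (fun p : X × Y => Real.log (u' i p.1)) (πi' i) := by
    intro i
    haveI := hfinπ'i i
    refine (integrable_const (Real.log C)).mono'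
      ((Real.measurable_log.comp ((hu' i).1.comp measurable_fst)).aestronglyMeasurable) ?_
    filter_upwards [haeπ' i] with p hp
    obtain ⟨-, h1, h2, -⟩ := hp
    rw [Real.norm_eq_abs, abs_le]
    constructor
    · have hlog := Real.log_le_log (by positivity) h1
      rw [one_div, Real.log_inv] at hlog
      linarith
    · exact Real.log_le_log (lt_of_lt_of_le (by positivity) h1) h2
  have hIb : ∀ i, Integrable (fun p : X × Y => Real.log (w (q i) p.2)) (πi i) := by
    intro i
    rw [hπiρ i, integrable_withDensity_iff (hℓm i)
      (Eventually.of_forall fun p =>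
        ENNReal.mul_lt_top ENNReal.ofReal_lt_top ENNReal.ofReal_lt_top)]
    refine (integrable_const ((C / cc i) * M)).mono'
      (((Real.measurable_log.comp ((hwm _).comp measurable_snd)).mul
        (hℓm i).ennreal_toReal).aestronglyMeasurable) ?_
    filter_upwards [hbundleρ] with p hb
    show ‖Real.log (w (q i) p.2) * (ℓ i p).toReal‖ ≤ C / cc i * M
    have hkp : 0 ≤ k p := (hk0 p).le
    have hCcc : (0:ℝ) ≤ C / cc i := (div_pos hC0 (hccpos i)).le
    by_cases hmem : p.1 ∈ Xc i
    · have hse := hs_eval i p hmem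
      have hu0 := (hb.1 i).1.1
      have huC := (hb.1 i).1.2
      have hv0 := (hb.2 i).1.1
      have hcv := (hb.2 i).2.2.2
      have hw0 : 0 ≤ w (q i) p.2 := le_trans (mul_nonneg (hccpos i).le hv0) hcv
      have hwC : w (q i) p.2 ≤ C := by
        rw [← (hb.2 i).2.2.1]; exact (hb.2 i).2.1.2
      have h1 : (ℓ i p).toReal = k p * s i p := by
        show (ENNReal.ofReal (k p) * ENNReal.ofReal (s i p)).toReal = _
        rw [ENNReal.toReal_mul, ENNReal.toReal_ofReal hkp,
          ENNReal.toReal_ofReal (by rw [hse]; exact mul_nonneg hu0 hv0)]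
      rw [h1, hse, Real.norm_eq_abs, abs_mul,
        abs_of_nonneg (mul_nonneg hkp (mul_nonneg hu0 hv0))]
      rcases eq_or_lt_of_le hw0 with hw | hw
      · have hv00 : v i p.2 = 0 := by nlinarith [hccpos i]
        rw [hv00, mul_zero, mul_zero, mul_zero]
        exact mul_nonneg hCcc hM0
      · have hvw2 : v i p.2 ≤ w (q i) p.2 / cc i := by
          rw [le_div_iff₀ (hccpos i)]; nlinarith [hcv]
        calc |Real.log (w (q i) p.2)| * (k p * (u i p.1 * v i p.2))
            ≤ |Real.log (w (q i) p.2)| * (1 * (C * (w (q i) p.2 / cc i))) := by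
              apply mul_le_mul_of_nonneg_left ?_ (abs_nonneg _)
              apply mul_le_mul (hk1 p) ?_ (mul_nonneg hu0 hv0) zero_le_one
              exact mul_le_mul huC hvw2 hv0 hC0.le
          _ = (C / cc i) * (w (q i) p.2 * |Real.log (w (q i) p.2)|) := by ring
          _ = (C / cc i) * |w (q i) p.2 * Real.log (w (q i) p.2)| := by
              rw [abs_mul, abs_of_nonneg hw0]
          _ ≤ C / cc i * M := mul_le_mul_of_nonneg_left (hMlog _ hw0 hwC) hCcc
    · have hz : s i p = 0 := by
        simp only [hs_def]
        exact Set.indicator_of_notMem (fun hm => hmem hm.1) _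
      have h1 : (ℓ i p) = 0 := by
        show ENNReal.ofReal (k p) * ENNReal.ofReal (s i p) = 0
        rw [hz, ENNReal.ofReal_zero, mul_zero]
      rw [h1]
      simp only [ENNReal.toReal_zero, mul_zero, norm_zero]
      exact mul_nonneg hCcc hM0
  have hIb' : ∀ i, Integrable (fun p : X × Y => Real.log (w (q i) p.2)) (πi' i) := by
    intro i
    rw [hπ'iρ i, integrable_withDensity_iff (hℓ'm i)
      (Eventually.of_forall fun p =>
        ENNReal.mul_lt_top ENNReal.ofReal_lt_top ENNReal.ofReal_lt_top)]
    refine (integrable_const (C * M)).mono'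
      (((Real.measurable_log.comp ((hwm _).comp measurable_snd)).mul
        (hℓ'm i).ennreal_toReal).aestronglyMeasurable) ?_
    filter_upwards [hbundleρ] with p hb
    show ‖Real.log (w (q i) p.2) * (ℓ' i p).toReal‖ ≤ C * M
    have hkp : 0 ≤ k p := (hk0 p).le
    by_cases hmem : p.1 ∈ Xc i
    · have hse := hs'_eval i p hmem
      have hu0 := (hb.1 i).2.1.1
      have huC := (hb.1 i).2.1.2
      have hv0 := (hb.2 i).2.1.1
      have hweq := (hb.2 i).2.2.1
      have hw0 : 0 ≤ w (q i) p.2 := hweq ▸ hv0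
      have hwC : w (q i) p.2 ≤ C := hweq ▸ (hb.2 i).2.1.2
      have h1 : (ℓ' i p).toReal = k p * s' i p := by
        show (ENNReal.ofReal (k p) * ENNReal.ofReal (s' i p)).toReal = _
        rw [ENNReal.toReal_mul, ENNReal.toReal_ofReal hkp,
          ENNReal.toReal_ofReal (by rw [hse]; exact mul_nonneg hu0 hv0)]
      rw [h1, hse, hweq, Real.norm_eq_abs, abs_mul,
        abs_of_nonneg (mul_nonneg hkp (mul_nonneg hu0 hw0))]
      calc |Real.log (w (q i) p.2)| * (k p * (u' i p.1 * w (q i) p.2))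
          ≤ |Real.log (w (q i) p.2)| * (1 * (C * w (q i) p.2)) := by
            apply mul_le_mul_of_nonneg_left ?_ (abs_nonneg _)
            apply mul_le_mul (hk1 p) ?_ (mul_nonneg hu0 hw0) zero_le_one
            exact mul_le_mul_of_nonneg_right huC hw0
        _ = C * (w (q i) p.2 * |Real.log (w (q i) p.2)|) := by ring
        _ = C * |w (q i) p.2 * Real.log (w (q i) p.2)| := by
            rw [abs_mul, abs_of_nonneg hw0]
        _ ≤ C * M := mul_le_mul_of_nonneg_left (hMlog _ hw0 hwC) hC0.le
    · have hz : s' i p = 0 := by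
        simp only [hs'_def]
        exact Set.indicator_of_notMem (fun hm => hmem hm.1) _
      have h1 : (ℓ' i p) = 0 := by
        show ENNReal.ofReal (k p) * ENNReal.ofReal (s' i p) = 0
        rw [hz, ENNReal.ofReal_zero, mul_zero]
      rw [h1]
      simp only [ENNReal.toReal_zero, mul_zero, norm_zero]
      exact mul_nonneg hC0.le hM0
  have hLsplit : ∀ i, L =ᵐ[πi i]
      fun p => Real.log (u' i p.1) + Real.log (w (q i) p.2) := by
    intro i
    filter_upwards [haeπ i] with p hp
    obtain ⟨-, -, -, h1, -, hw, -, hfe, -⟩ := hp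
    show Real.log (f' p) = _
    rw [hfe]
    exact Real.log_mul (ne_of_gt (lt_of_lt_of_le (by positivity) h1)) hw.ne'
  have hLsplit' : ∀ i, L =ᵐ[πi' i]
      fun p => Real.log (u' i p.1) + Real.log (w (q i) p.2) := by
    intro i
    filter_upwards [haeπ' i] with p hp
    obtain ⟨-, h1, -, hw, -, hfe⟩ := hp
    show Real.log (f' p) = _
    rw [hfe]
    exact Real.log_mul (ne_of_gt (lt_of_lt_of_le (by positivity) h1)) hw.ne'
  have hILsum : ∀ i, Integrable
      (fun p : X × Y => Real.log (u' i p.1) + Real.log (w (q i) p.2)) (πi i) :=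
    fun i => (hIa i).add (hIb i)
  have hILsum' : ∀ i, Integrable
      (fun p : X × Y => Real.log (u' i p.1) + Real.log (w (q i) p.2)) (πi' i) :=
    fun i => (hIa' i).add (hIb' i)
  have hIL : ∀ i, Integrable L (πi i) := fun i => (hILsum i).congr (hLsplit i).symm
  have hIL' : ∀ i, Integrable L (πi' i) := fun i => (hILsum' i).congr (hLsplit' i).symm
  -- the X-marginal matched integrals
  have hfsteq : ∀ i, ∫ p, Real.log (u' i p.1) ∂(πi i)
      = ∫ p, Real.log (u' i p.1) ∂(πi' i) := by
    intro i
    have hmeas : AEStronglyMeasurable (fun x => Real.log (u' i x)) (μ.restrict (Xc i)) :=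
      (Real.measurable_log.comp (hu' i).1).aestronglyMeasurable
    have e1 : ∫ x, Real.log (u' i x) ∂((πi i).map Prod.fst) = ∫ p, Real.log (u' i p.1) ∂(πi i) :=
      integral_map measurable_fst.aemeasurable (by rw [hX i]; exact hmeas)
    have e2 : ∫ x, Real.log (u' i x) ∂((πi' i).map Prod.fst) = ∫ p, Real.log (u' i p.1) ∂(πi' i) :=
      integral_map measurable_fst.aemeasurable (by rw [hX' i]; exact hmeas)
    rw [← e1, ← e2, hX i, hX' i]
  -- the Y-marginal matched integrals
  have hIbmap : ∀ i, Integrable (fun y => Real.log (w (q i) y)) ((πi i).map Prod.snd) := by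
    intro i
    exact (integrable_map_measure
      ((Real.measurable_log.comp (hwm (q i))).aestronglyMeasurable)
      measurable_snd.aemeasurable).mpr (hIb i)
  have hIbmap' : ∀ i, Integrable (fun y => Real.log (w (q i) y)) ((πi' i).map Prod.snd) := by
    intro i
    exact (integrable_map_measure
      ((Real.measurable_log.comp (hwm (q i))).aestronglyMeasurable)
      measurable_snd.aemeasurable).mpr (hIb' i)
  have hsndint : ∀ i, ∫ p, Real.log (w (q i) p.2) ∂(πi i)
      = ∫ y, Real.log (w (q i) y) ∂((πi i).map Prod.snd) :=
    fun i => (integral_map measurable_snd.aemeasurable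
      (Real.measurable_log.comp (hwm _)).aestronglyMeasurable).symm
  have hsndint' : ∀ i, ∫ p, Real.log (w (q i) p.2) ∂(πi' i)
      = ∫ y, Real.log (w (q i) y) ∂((πi' i).map Prod.snd) :=
    fun i => (integral_map measurable_snd.aemeasurable
      (Real.measurable_log.comp (hwm _)).aestronglyMeasurable).symm
  have hsndsum : (∑ i, ∫ y, Real.log (w (q i) y) ∂((πi i).map Prod.snd))
      = ∑ i, ∫ y, Real.log (w (q i) y) ∂((πi' i).map Prod.snd) := by
    rw [← Finset.sum_fiberwise Finset.univ q
        (fun i => ∫ y, Real.log (w (q i) y) ∂((πi i).map Prod.snd)),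
      ← Finset.sum_fiberwise Finset.univ q
        (fun i => ∫ y, Real.log (w (q i) y) ∂((πi' i).map Prod.snd))]
    refine Finset.sum_congr rfl (fun J _ => ?_)
    calc ∑ i ∈ Finset.univ.filter (fun i => q i = J),
          ∫ y, Real.log (w (q i) y) ∂((πi i).map Prod.snd)
        = ∑ i ∈ Finset.univ.filter (fun i => q i = J),
          ∫ y, Real.log (w J y) ∂((πi i).map Prod.snd) :=
          Finset.sum_congr rfl (fun i hi => by rw [(Finset.mem_filter.mp hi).2])
      _ = ∫ y, Real.log (w J y)
            ∂(∑ i ∈ Finset.univ.filter (fun i => q i = J), (πi i).map Prod.snd) :=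
          (integral_finset_sum_measure (fun i hi => by
            rw [← (Finset.mem_filter.mp hi).2]; exact hIbmap i)).symm
      _ = ∫ y, Real.log (w J y)
            ∂(∑ i ∈ Finset.univ.filter (fun i => q i = J), (πi' i).map Prod.snd) := by
          rw [hY J]
      _ = ∑ i ∈ Finset.univ.filter (fun i => q i = J),
          ∫ y, Real.log (w J y) ∂((πi' i).map Prod.snd) :=
          integral_finset_sum_measure (fun i hi => by
            rw [← (Finset.mem_filter.mp hi).2]; exact hIbmap' i)
      _ = ∑ i ∈ Finset.univ.filter (fun i => q i = J),
          ∫ y, Real.log (w (q i) y) ∂((πi' i).map Prod.snd) :=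
          Finset.sum_congr rfl (fun i hi => by rw [(Finset.mem_filter.mp hi).2])
  -- the central equality
  have hLπ : ∫ p, L p ∂π = ∫ p, L p ∂π' := by
    have e1 : ∀ i, ∫ p, L p ∂(πi i) = ∫ p, Real.log (u' i p.1) ∂(πi i)
        + ∫ p, Real.log (w (q i) p.2) ∂(πi i) := fun i => by
      rw [integral_congr_ae (hLsplit i), integral_add (hIa i) (hIb i)]
    have e1' : ∀ i, ∫ p, L p ∂(πi' i) = ∫ p, Real.log (u' i p.1) ∂(πi' i)
        + ∫ p, Real.log (w (q i) p.2) ∂(πi' i) := fun i => by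
      rw [integral_congr_ae (hLsplit' i), integral_add (hIa' i) (hIb' i)]
    rw [hπ, hπ', integral_finset_sum_measure (fun i _ => hIL i),
      integral_finset_sum_measure (fun i _ => hIL' i),
      Finset.sum_congr rfl (fun i _ => e1 i), Finset.sum_congr rfl (fun i _ => e1' i),
      Finset.sum_add_distrib, Finset.sum_add_distrib]
    congr 1
    · exact Finset.sum_congr rfl (fun i _ => hfsteq i)
    · rw [Finset.sum_congr rfl (fun i _ => hsndint i),
        Finset.sum_congr rfl (fun i _ => hsndint' i)]
      exact hsndsum
  -- bridges to K-integrals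
  have hbridge : ∫ p, f p * L p ∂K = ∫ p, L p ∂π := by
    rw [hπK,
      show (fun p => ENNReal.ofReal (f p))
        = fun p => ((f p).toNNReal : ℝ≥0∞) from rfl,
      integral_withDensity_eq_integral_smul hfm.real_toNNReal L]
    apply integral_congr_ae
    filter_upwards [hb_f0] with p h0
    rw [NNReal.smul_def, Real.coe_toNNReal _ h0, smul_eq_mul]
  have hbridge' : ∫ p, f' p * L p ∂K = ∫ p, L p ∂π' := by
    rw [hπ'K,
      show (fun p => ENNReal.ofReal (f' p))
        = fun p => ((f' p).toNNReal : ℝ≥0∞) from rfl,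
      integral_withDensity_eq_integral_smul hf'm.real_toNNReal L]
    apply integral_congr_ae
    filter_upwards [hb_f0'] with p h0
    rw [NNReal.smul_def, Real.coe_toNNReal _ h0, smul_eq_mul]
  have hIntfL : Integrable (fun p => f p * L p) K := by
    have h1 : Integrable L π := by
      rw [hπ]; exact integrable_finset_sum_measure.mpr (fun i _ => hIL i)
    rw [hπK, integrable_withDensity_iff hfm.ennreal_ofReal
      (Eventually.of_forall fun p => ENNReal.ofReal_lt_top)] at h1
    refine h1.congr ?_
    filter_upwards [hb_f0] with p h0
    rw [ENNReal.toReal_ofReal h0, mul_comm]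
  have heqfin : ∫ p, f p * Real.log (f' p) ∂K = ∫ p, f' p * Real.log (f' p) ∂K := by
    calc ∫ p, f p * Real.log (f' p) ∂K = ∫ p, L p ∂π := hbridge
      _ = ∫ p, L p ∂π' := hLπ
      _ = ∫ p, f' p * Real.log (f' p) ∂K := hbridge'.symm
  rw [hπK, hπ'K]
  exact kl_pythagoras K hfm hf'm (C := C * C) (by nlinarith) hb_f0 hb_fC hb_f0' hb_fC'
    hb_abs hIntfL heqfin
end
end

section
/- (Primal-dual gap bound) Let {X_i}_{i∈I} be a finite measurable partition of X, K_i := K restricted to X_i×Y, and let π̃ := Σ_{i∈I} (ũ_i⊗ṽ_i)·K_i with ũ_i ∈ L^∞₊(X,μ), ṽ_i ∈ L^∞₊(Y,ν), and π̂ := (û⊗v̂)·K with û ∈ L^∞₊(X,μ), v̂ ∈ L^∞₊(Y,ν). If π̃ ∈ Π(μ,ν), then Δ(π̃) ≤ KL(π̃|π̂), where Δ(π) := KL(π|K) − KL(π*|K) and π* is the unique minimizer of KL(·|K) over Π(μ,ν). -/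
open MeasureTheory ENNReal Filter Topology

noncomputable section

/-- Decomposition of `phi` of a product (with junk-value conventions at `0`). -/
lemma phi_mul {f g : ℝ} (hf : 0 ≤ f) (hg : 0 ≤ g) :
    phi (g * f) = f * phi g + g * f * Real.log f + (1 - f) := by
  rcases eq_or_lt_of_le hf with hf0 | hf0
  · simp [phi, ← hf0]
  rcases eq_or_lt_of_le hg with hg0 | hg0
  · simp [phi, ← hg0]
  · unfold phi
    rw [Real.log_mul hg0.ne' hf0.ne']
    ring

/-- The Fenchel-type inequality `a log b ≤ phi a - 1 + b`. -/
lemma mul_log_le {a b : ℝ} (ha : 0 ≤ a) (hb : 0 < b) :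
    a * Real.log b ≤ phi a - 1 + b := by
  rcases eq_or_lt_of_le ha with ha0 | ha0
  · simp [phi, ← ha0]; positivity
  · have h1 : Real.log (b / a) ≤ b / a - 1 := Real.log_le_sub_one_of_pos (by positivity)
    rw [Real.log_div hb.ne' ha0.ne'] at h1
    have h2 : a * (Real.log b - Real.log a) ≤ a * (b / a - 1) :=
      mul_le_mul_of_nonneg_left h1 ha
    have h3 : a * (b / a) = b := by field_simp
    unfold phi; nlinarith

/-- An a.e. nonnegative measurable function with finite `ofReal`-lintegral is integrable. -/
lemma integrable_of_lintegral_ofReal_ne_top {α : Type*} [MeasurableSpace α] {μ : Measure α}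
    {F : α → ℝ} (hF : AEStronglyMeasurable F μ) (h0 : 0 ≤ᵐ[μ] F)
    (h : ∫⁻ a, ENNReal.ofReal (F a) ∂μ ≠ ⊤) : Integrable F μ := by
  refine ⟨hF, ?_⟩
  rw [hasFiniteIntegral_iff_norm]
  have heq : (fun a => ENNReal.ofReal ‖F a‖) =ᵐ[μ] fun a => ENNReal.ofReal (F a) := by
    filter_upwards [h0] with a ha using by rw [Real.norm_of_nonneg ha]
  rw [lintegral_congr_ae heq]
  exact h.lt_top

/-- Monotonicity of `log` allowing the junk value at `0`. -/
lemma log_le_of_le {a b : ℝ} (ha : 0 ≤ a) (hab : a ≤ b) (hb : 1 ≤ b) :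
    Real.log a ≤ Real.log b := by
  rcases eq_or_lt_of_le ha with h | h
  · rw [← h, Real.log_zero]; exact Real.log_nonneg hb
  · exact Real.log_le_log h hab

set_option maxHeartbeats 1000000 in
/-- Lemma 3.5, primal-dual gap bound: for a feasible plan `π̃`
built from scaled kernels over a partition and any `π̂ = (û ⊗ v̂)·K`,
`Δ(π̃) ≤ KL(π̃|π̂)`, i.e. `KL(π̃|K) ≤ KL(π̃|π̂) + KL(π*|K)`. -/
theorem primal_dual_gap_bound
    {X Y : Type*} [MetricSpace X] [CompactSpace X] [MeasurableSpace X] [BorelSpace X]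
    [MetricSpace Y] [CompactSpace Y] [MeasurableSpace Y] [BorelSpace Y]
    (μ : Measure X) (ν : Measure Y) [IsProbabilityMeasure μ] [IsProbabilityMeasure ν]
    (c : X × Y → ℝ) (hc : Measurable c) (cmax : ℝ)
    (hc0 : ∀ p, 0 ≤ c p) (hcmax : ∀ p, c p ≤ cmax)
    (ε : ℝ) (hε : 0 < ε)
    (πopt : Measure (X × Y)) (hπopt : πopt ∈ Coupling μ ν)
    (hmin : ∀ π ∈ Coupling μ ν, KL πopt (Kmeas μ ν c ε) ≤ KL π (Kmeas μ ν c ε))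
    {ι : Type*} [Fintype ι]
    (Xc : ι → Set X) (hXm : ∀ i, MeasurableSet (Xc i))
    (hXd : ∀ i j, i ≠ j → Disjoint (Xc i) (Xc j)) (hXu : (⋃ i, Xc i) = Set.univ)
    (ut : ι → X → ℝ) (vt : ι → Y → ℝ)
    (hut : ∀ i, LinftyPlus μ (ut i)) (hvt : ∀ i, LinftyPlus ν (vt i))
    (πt : Measure (X × Y))
    (hπt : πt = ∑ i,
      ((Kmeas μ ν c ε).restrict (Xc i ×ˢ Set.univ)).withDensity (prodDensity (ut i) (vt i)))
    (uh : X → ℝ) (vh : Y → ℝ) (huh : LinftyPlus μ uh) (hvh : LinftyPlus ν vh)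
    (πh : Measure (X × Y)) (hπh : πh = (Kmeas μ ν c ε).withDensity (prodDensity uh vh))
    (hπtfeas : πt ∈ Coupling μ ν) :
    KL πt (Kmeas μ ν c ε) ≤ KL πt πh + KL πopt (Kmeas μ ν c ε) := by
  classical
  obtain ⟨huhm, huh0, Cu, huhC⟩ := huh
  obtain ⟨hvhm, hvh0, Cv, hvhC⟩ := hvh
  obtain ⟨ht1, ht2⟩ := hπtfeas
  obtain ⟨ho1, ho2⟩ := hπopt
  -- trivial cases
  by_cases hKLth : KL πt πh = ⊤
  · rw [hKLth, top_add]; exact le_top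
  by_cases hKLoK : KL πopt (Kmeas μ ν c ε) = ⊤
  · rw [hKLoK, add_top]; exact le_top
  have hth : πt ≪ πh := by
    by_contra hcon
    exact hKLth (by simp only [KL]; rw [if_neg hcon])
  have hoK : πopt ≪ Kmeas μ ν c ε := by
    by_contra hcon
    exact hKLoK (by simp only [KL]; rw [if_neg hcon])
  set K : Measure (X × Y) := Kmeas μ ν c ε with hKdef
  have hfEm : Measurable (prodDensity uh vh) :=
    ((huhm.comp measurable_fst).mul (hvhm.comp measurable_snd)).ennreal_ofReal
  have hKac : K ≪ μ.prod ν := withDensity_absolutelyContinuous _ _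
  have hhK : πh ≪ K := by rw [hπh]; exact withDensity_absolutelyContinuous K _
  have htK : πt ≪ K := hth.trans hhK
  -- K is a finite measure
  haveI hKfin : IsFiniteMeasure K := by
    constructor
    rw [hKdef, Kmeas, withDensity_apply _ MeasurableSet.univ, setLIntegral_univ]
    calc ∫⁻ p, ENNReal.ofReal (Real.exp (-c p / ε)) ∂(μ.prod ν)
        ≤ ∫⁻ _, 1 ∂(μ.prod ν) := by
          refine lintegral_mono fun p => ?_
          refine ENNReal.ofReal_le_one.mpr (Real.exp_le_one_iff.mpr ?_)
          have h1 : 0 ≤ c p / ε := div_nonneg (hc0 p) hε.le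
          rw [neg_div]; linarith
      _ < ⊤ := by simp
  -- πt, πopt are probability measures
  haveI hπtprob : IsProbabilityMeasure πt := by
    constructor
    have h := congrArg (fun m : Measure X => m Set.univ) ht1
    simpa [Measure.map_apply measurable_fst MeasurableSet.univ] using h
  haveI hπoprob : IsProbabilityMeasure πopt := by
    constructor
    have h := congrArg (fun m : Measure X => m Set.univ) ho1
    simpa [Measure.map_apply measurable_fst MeasurableSet.univ] using h
  haveI : πt.HaveLebesgueDecomposition K := Measure.haveLebesgueDecomposition_of_finiteMeasure
  haveI : πopt.HaveLebesgueDecomposition K := Measure.haveLebesgueDecomposition_of_finiteMeasure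
  -- essential bounds
  set Cu' : ℝ := max Cu 1 with hCu'
  set Cv' : ℝ := max Cv 1 with hCv'
  have hCu1 : (1 : ℝ) ≤ Cu' := le_max_right _ _
  have hCv1 : (1 : ℝ) ≤ Cv' := le_max_right _ _
  have hu' : ∀ᵐ x ∂μ, 0 ≤ uh x ∧ uh x ≤ Cu' := by
    filter_upwards [huh0, huhC] with x h1 h2
    exact ⟨h1, h2.trans (le_max_left _ _)⟩
  have hv' : ∀ᵐ y ∂ν, 0 ≤ vh y ∧ vh y ≤ Cv' := by
    filter_upwards [hvh0, hvhC] with y h1 h2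
    exact ⟨h1, h2.trans (le_max_left _ _)⟩
  have hqfst : Measure.QuasiMeasurePreserving Prod.fst K μ := by
    refine (Measure.QuasiMeasurePreserving.mono_left ?_ hKac)
    refine ⟨measurable_fst, ?_⟩
    rw [Measure.map_fst_prod]
    simp only [measure_univ, one_smul]
    exact Measure.AbsolutelyContinuous.rfl
  have hqsnd : Measure.QuasiMeasurePreserving Prod.snd K ν := by
    refine (Measure.QuasiMeasurePreserving.mono_left ?_ hKac)
    refine ⟨measurable_snd, ?_⟩
    rw [Measure.map_snd_prod]
    simp only [measure_univ, one_smul]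
    exact Measure.AbsolutelyContinuous.rfl
  have hKu : ∀ᵐ p ∂K, 0 ≤ uh p.1 ∧ uh p.1 ≤ Cu' := hqfst.ae hu'
  have hKv : ∀ᵐ p ∂K, 0 ≤ vh p.2 ∧ vh p.2 ≤ Cv' := hqsnd.ae hv'
  -- πh is a finite measure
  haveI hπhfin : IsFiniteMeasure πh := by
    constructor
    rw [hπh, withDensity_apply _ MeasurableSet.univ, setLIntegral_univ]
    calc ∫⁻ p, prodDensity uh vh p ∂K
        ≤ ∫⁻ _, ENNReal.ofReal (Cu' * Cv') ∂K := by
          refine lintegral_mono_ae ?_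
          filter_upwards [hKu, hKv] with p h1 h2
          exact ENNReal.ofReal_le_ofReal
            (mul_le_mul h1.2 h2.2 h2.1 (zero_le_one.trans hCu1))
      _ < ⊤ := by
          rw [lintegral_const]
          exact ENNReal.mul_lt_top ofReal_lt_top (measure_lt_top K _)

  -- Radon--Nikodym chain rule facts
  have hrtgm : Measurable fun p => (πt.rnDeriv πh p).toReal :=
    (Measure.measurable_rnDeriv πt πh).ennreal_toReal
  have hrhm : Measurable fun p => (πopt.rnDeriv K p).toReal :=
    (Measure.measurable_rnDeriv πopt K).ennreal_toReal
  have hfrm : Measurable fun p : X × Y => uh p.1 * vh p.2 :=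
    (huhm.comp measurable_fst).mul (hvhm.comp measurable_snd)
  have hπhd : πh.rnDeriv K =ᵐ[K] prodDensity uh vh := by
    rw [hπh]; exact Measure.rnDeriv_withDensity K hfEm
  have hF1 : πt.rnDeriv K =ᵐ[K] fun p => πt.rnDeriv πh p * prodDensity uh vh p := by
    have h := Measure.rnDeriv_mul_rnDeriv (κ := K) hth
    filter_upwards [h, hπhd] with p h1 h2
    rw [← h1]
    simp only [Pi.mul_apply]
    rw [h2]
  have hF2 : (fun p => (πt.rnDeriv K p).toReal)
      =ᵐ[K] fun p => (πt.rnDeriv πh p).toReal * (uh p.1 * vh p.2) := by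
    filter_upwards [hF1, hKu, hKv] with p h1 h2 h3
    rw [h1, ENNReal.toReal_mul]
    simp only [prodDensity]
    rw [ENNReal.toReal_ofReal (mul_nonneg h2.1 h3.1)]
  -- KL formulas
  have hKLtK : KL πt K
      = ∫⁻ p, ENNReal.ofReal (phi ((πt.rnDeriv πh p).toReal * (uh p.1 * vh p.2))) ∂K := by
    simp only [KL, if_pos htK]
    refine lintegral_congr_ae ?_
    filter_upwards [hF2] with p hp
    exact congrArg (fun t => ENNReal.ofReal (phi t)) hp
  have hKLthK : KL πt πh
      = ∫⁻ p, ENNReal.ofReal ((uh p.1 * vh p.2) * phi ((πt.rnDeriv πh p).toReal)) ∂K := by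
    simp only [KL, if_pos hth]
    set F : X × Y → ℝ≥0∞ := fun p => ENNReal.ofReal (phi ((πt.rnDeriv πh p).toReal)) with hFdef
    have hFm : Measurable F := (measurable_phi.comp hrtgm).ennreal_ofReal
    rw [hπh, lintegral_withDensity_eq_lintegral_mul K hfEm hFm]
    refine lintegral_congr_ae ?_
    filter_upwards [hKu, hKv] with p h1 h2
    simp only [Pi.mul_apply, hFdef, prodDensity]
    rw [ENNReal.ofReal_mul (mul_nonneg h1.1 h2.1), ← hπh]
  have hKLoKK : KL πopt K = ∫⁻ p, ENNReal.ofReal (phi ((πopt.rnDeriv K p).toReal)) ∂K := by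
    simp only [KL, if_pos hoK]
  -- integrability of the pieces
  have hintA : Integrable (fun p => (uh p.1 * vh p.2) * phi ((πt.rnDeriv πh p).toReal)) K := by
    refine integrable_of_lintegral_ofReal_ne_top
      ((hfrm.mul (measurable_phi.comp hrtgm)).aestronglyMeasurable) ?_ ?_
    · filter_upwards [hKu, hKv] with p h1 h2
      exact mul_nonneg (mul_nonneg h1.1 h2.1) (phi_nonneg ENNReal.toReal_nonneg)
    · rw [← hKLthK]; exact hKLth
  have hA0 : 0 ≤ ∫ p, (uh p.1 * vh p.2) * phi ((πt.rnDeriv πh p).toReal) ∂K := by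
    refine integral_nonneg_of_ae ?_
    filter_upwards [hKu, hKv] with p h1 h2
    exact mul_nonneg (mul_nonneg h1.1 h2.1) (phi_nonneg ENNReal.toReal_nonneg)
  have hofRealA : ENNReal.ofReal (∫ p, (uh p.1 * vh p.2) * phi ((πt.rnDeriv πh p).toReal) ∂K)
      = KL πt πh := by
    rw [ofReal_integral_eq_lintegral_ofReal hintA ?_, hKLthK]
    filter_upwards [hKu, hKv] with p h1 h2
    exact mul_nonneg (mul_nonneg h1.1 h2.1) (phi_nonneg ENNReal.toReal_nonneg)
  have hintD : Integrable (fun p => phi ((πopt.rnDeriv K p).toReal)) K := by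
    refine integrable_of_lintegral_ofReal_ne_top
      ((measurable_phi.comp hrhm).aestronglyMeasurable)
      (Filter.Eventually.of_forall fun p => phi_nonneg ENNReal.toReal_nonneg) ?_
    rw [← hKLoKK]; exact hKLoK
  have hD0 : 0 ≤ ∫ p, phi ((πopt.rnDeriv K p).toReal) ∂K :=
    integral_nonneg fun p => phi_nonneg ENNReal.toReal_nonneg
  have hofRealD : ENNReal.ofReal (∫ p, phi ((πopt.rnDeriv K p).toReal) ∂K) = KL πopt K := by
    rw [ofReal_integral_eq_lintegral_ofReal hintD
      (Filter.Eventually.of_forall fun p => phi_nonneg ENNReal.toReal_nonneg), hKLoKK]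
  -- integrability of rnDeriv πt K (toReal)
  have hGFof : (fun p => ENNReal.ofReal ((πt.rnDeriv K p).toReal)) =ᵐ[K] πt.rnDeriv K := by
    filter_upwards [Measure.rnDeriv_lt_top πt K] with p hp using ENNReal.ofReal_toReal hp.ne
  have hintGF : Integrable (fun p => (πt.rnDeriv K p).toReal) K := by
    refine integrable_of_lintegral_ofReal_ne_top
      ((Measure.measurable_rnDeriv πt K).ennreal_toReal.aestronglyMeasurable)
      (Filter.Eventually.of_forall fun p => ENNReal.toReal_nonneg) ?_
    rw [lintegral_congr_ae hGFof, Measure.lintegral_rnDeriv htK]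
    simp
  have hintGF' : Integrable (fun p => (πt.rnDeriv πh p).toReal * (uh p.1 * vh p.2)) K :=
    hintGF.congr hF2
  have hintfr : Integrable (fun p : X × Y => uh p.1 * vh p.2) K := by
    refine Integrable.mono' (integrable_const (Cu' * Cv')) hfrm.aestronglyMeasurable ?_
    filter_upwards [hKu, hKv] with p h1 h2
    rw [Real.norm_eq_abs, abs_of_nonneg (mul_nonneg h1.1 h2.1)]
    exact mul_le_mul h1.2 h2.2 h2.1 (zero_le_one.trans hCu1)

  -- integrability of g * fr * log fr
  have hintB : Integrable
      (fun p => (πt.rnDeriv πh p).toReal * (uh p.1 * vh p.2) * Real.log (uh p.1 * vh p.2)) K := by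
    have hbint : Integrable (fun p =>
        (πt.rnDeriv πh p).toReal * (uh p.1 * vh p.2) * Real.log (Cu' * Cv')
        + ((uh p.1 * vh p.2) * phi ((πt.rnDeriv πh p).toReal) + 1)) K := by
      exact (hintGF'.mul_const _).add (hintA.add (integrable_const 1))
    refine Integrable.mono' hbint
      (((hrtgm.mul hfrm).mul (Real.measurable_log.comp hfrm)).aestronglyMeasurable) ?_
    filter_upwards [hKu, hKv] with p h1 h2
    have hg0 : 0 ≤ (πt.rnDeriv πh p).toReal := ENNReal.toReal_nonneg
    have hfr0 : 0 ≤ uh p.1 * vh p.2 := mul_nonneg h1.1 h2.1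
    have hM1 : (1:ℝ) ≤ Cu' * Cv' := by nlinarith
    have hfrM : uh p.1 * vh p.2 ≤ Cu' * Cv' :=
      mul_le_mul h1.2 h2.2 h2.1 (zero_le_one.trans hCu1)
    have hlogle : Real.log (uh p.1 * vh p.2) ≤ Real.log (Cu' * Cv') :=
      log_le_of_le hfr0 hfrM hM1
    have hlogM0 : 0 ≤ Real.log (Cu' * Cv') := Real.log_nonneg hM1
    have hup : (πt.rnDeriv πh p).toReal * (uh p.1 * vh p.2) * Real.log (uh p.1 * vh p.2)
        ≤ (πt.rnDeriv πh p).toReal * (uh p.1 * vh p.2) * Real.log (Cu' * Cv') :=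
      mul_le_mul_of_nonneg_left hlogle (mul_nonneg hg0 hfr0)
    have hid := phi_mul hfr0 hg0
    have hphia : 0 ≤ phi ((πt.rnDeriv πh p).toReal * (uh p.1 * vh p.2)) :=
      phi_nonneg (mul_nonneg hg0 hfr0)
    have hphig : 0 ≤ phi ((πt.rnDeriv πh p).toReal) := phi_nonneg hg0
    rw [Real.norm_eq_abs, abs_le]
    constructor
    · nlinarith [mul_nonneg (mul_nonneg hg0 hfr0) hlogM0, mul_nonneg hfr0 hphig]
    · nlinarith [mul_nonneg hfr0 hphig]
  have hintC : Integrable (fun p : X × Y => 1 - uh p.1 * vh p.2) K :=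
    (integrable_const 1).sub hintfr
  -- decomposition identity
  have hsum : (fun p => phi ((πt.rnDeriv πh p).toReal * (uh p.1 * vh p.2)))
      =ᵐ[K] fun p => (uh p.1 * vh p.2) * phi ((πt.rnDeriv πh p).toReal)
        + (πt.rnDeriv πh p).toReal * (uh p.1 * vh p.2) * Real.log (uh p.1 * vh p.2)
        + (1 - uh p.1 * vh p.2) := by
    filter_upwards [hKu, hKv] with p h1 h2
    exact phi_mul (mul_nonneg h1.1 h2.1) ENNReal.toReal_nonneg
  have hABC : KL πt K = ENNReal.ofReal
      ((∫ p, (uh p.1 * vh p.2) * phi ((πt.rnDeriv πh p).toReal) ∂K)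
      + (∫ p, (πt.rnDeriv πh p).toReal * (uh p.1 * vh p.2) * Real.log (uh p.1 * vh p.2) ∂K)
      + (∫ p, (1 - uh p.1 * vh p.2) ∂K)) := by
    have hintAB : Integrable (fun p => (uh p.1 * vh p.2) * phi ((πt.rnDeriv πh p).toReal)
        + (πt.rnDeriv πh p).toReal * (uh p.1 * vh p.2) * Real.log (uh p.1 * vh p.2)) K := by
      exact hintA.add hintB
    have hintSum : Integrable (fun p => (uh p.1 * vh p.2) * phi ((πt.rnDeriv πh p).toReal)
        + (πt.rnDeriv πh p).toReal * (uh p.1 * vh p.2) * Real.log (uh p.1 * vh p.2)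
        + (1 - uh p.1 * vh p.2)) K := by
      exact hintAB.add hintC
    rw [hKLtK, lintegral_congr_ae (hsum.mono fun p hp => congrArg ENNReal.ofReal hp)]
    rw [← ofReal_integral_eq_lintegral_ofReal hintSum ?_]
    · rw [integral_add hintAB hintC, integral_add hintA hintB]
    · filter_upwards [hsum, hKu, hKv] with p h1 h2 h3
      rw [← h1]
      exact phi_nonneg (mul_nonneg ENNReal.toReal_nonneg (mul_nonneg h2.1 h3.1))

  -- the dual potential lam(p) = log uh(p1) + log vh(p2)
  have hBlam : (fun p => (πt.rnDeriv πh p).toReal * (uh p.1 * vh p.2) * Real.log (uh p.1 * vh p.2))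
      =ᵐ[K] fun p => (πt.rnDeriv πh p).toReal * (uh p.1 * vh p.2)
        * (Real.log (uh p.1) + Real.log (vh p.2)) := by
    filter_upwards [hKu, hKv] with p h1 h2
    rcases eq_or_lt_of_le h1.1 with h | h
    · simp [← h]
    rcases eq_or_lt_of_le h2.1 with h' | h'
    · simp [← h']
    · rw [Real.log_mul h.ne' h'.ne']
  have hsmul_t : (fun p => (πt.rnDeriv K p).toReal • (Real.log (uh p.1) + Real.log (vh p.2)))
      =ᵐ[K] fun p => (πt.rnDeriv πh p).toReal * (uh p.1 * vh p.2)
        * Real.log (uh p.1 * vh p.2) := by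
    filter_upwards [hF2, hBlam] with p h1 h2
    rw [smul_eq_mul, h1, h2]
  have hBt : (∫ p, (πt.rnDeriv πh p).toReal * (uh p.1 * vh p.2) * Real.log (uh p.1 * vh p.2) ∂K)
      = ∫ p, (Real.log (uh p.1) + Real.log (vh p.2)) ∂πt :=
    calc (∫ p, (πt.rnDeriv πh p).toReal * (uh p.1 * vh p.2) * Real.log (uh p.1 * vh p.2) ∂K)
        = ∫ p, (πt.rnDeriv K p).toReal • (Real.log (uh p.1) + Real.log (vh p.2)) ∂K :=
          (integral_congr_ae hsmul_t).symm
      _ = ∫ p, (Real.log (uh p.1) + Real.log (vh p.2)) ∂πt :=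
          integral_rnDeriv_smul htK
  have hintlamK : Integrable
      (fun p => (πt.rnDeriv K p).toReal • (Real.log (uh p.1) + Real.log (vh p.2))) K :=
    hintB.congr hsmul_t.symm
  have hintlamt : Integrable (fun p : X × Y => Real.log (uh p.1) + Real.log (vh p.2)) πt :=
    (integrable_rnDeriv_smul_iff htK).mp hintlamK
  -- a.e. bounds along πt
  have hqt1 : Measure.QuasiMeasurePreserving Prod.fst πt μ := by
    refine ⟨measurable_fst, ?_⟩
    rw [ht1]
  have hqt2 : Measure.QuasiMeasurePreserving Prod.snd πt ν := by
    refine ⟨measurable_snd, ?_⟩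
    rw [ht2]
  have htu : ∀ᵐ p ∂πt, 0 ≤ uh p.1 ∧ uh p.1 ≤ Cu' := hqt1.ae hu'
  have htv : ∀ᵐ p ∂πt, 0 ≤ vh p.2 ∧ vh p.2 ≤ Cv' := hqt2.ae hv'
  have hintw1t : Integrable (fun p : X × Y => Real.log (uh p.1)) πt := by
    have hbint : Integrable (fun p : X × Y =>
        |Real.log Cu'| + |Real.log Cv'| + |Real.log (uh p.1) + Real.log (vh p.2)|) πt := by
      exact (integrable_const _).add hintlamt.abs
    refine Integrable.mono' hbint
      (((Real.measurable_log.comp huhm).comp measurable_fst).aestronglyMeasurable) ?_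
    filter_upwards [htu, htv] with p h1 h2
    have hlu : Real.log (uh p.1) ≤ |Real.log Cu'| :=
      (log_le_of_le h1.1 h1.2 hCu1).trans (le_abs_self _)
    have hlv : Real.log (vh p.2) ≤ |Real.log Cv'| :=
      (log_le_of_le h2.1 h2.2 hCv1).trans (le_abs_self _)
    have hnl := neg_abs_le (Real.log (uh p.1) + Real.log (vh p.2))
    rw [Real.norm_eq_abs, abs_le]
    constructor
    · linarith [abs_nonneg (Real.log Cu')]
    · linarith [abs_nonneg (Real.log Cv'),
        abs_nonneg (Real.log (uh p.1) + Real.log (vh p.2))]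
  have hintw2t : Integrable (fun p : X × Y => Real.log (vh p.2)) πt := by
    refine (hintlamt.sub hintw1t).congr (Filter.Eventually.of_forall fun p => by simp only [Pi.sub_apply]; ring)
  -- transfer integrability to μ, ν, and πopt
  have hw1μ : Integrable (fun x => Real.log (uh x)) μ := by
    rw [← ht1]
    exact (integrable_map_measure ((Real.measurable_log.comp huhm).aestronglyMeasurable)
      measurable_fst.aemeasurable).mpr hintw1t
  have hw2ν : Integrable (fun y => Real.log (vh y)) ν := by
    rw [← ht2]
    exact (integrable_map_measure ((Real.measurable_log.comp hvhm).aestronglyMeasurable)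
      measurable_snd.aemeasurable).mpr hintw2t
  have hintw1o : Integrable (fun p : X × Y => Real.log (uh p.1)) πopt :=
    (integrable_map_measure ((Real.measurable_log.comp huhm).aestronglyMeasurable)
      measurable_fst.aemeasurable).mp (by rw [ho1]; exact hw1μ)
  have hintw2o : Integrable (fun p : X × Y => Real.log (vh p.2)) πopt :=
    (integrable_map_measure ((Real.measurable_log.comp hvhm).aestronglyMeasurable)
      measurable_snd.aemeasurable).mp (by rw [ho2]; exact hw2ν)
  have hintlamo : Integrable (fun p : X × Y => Real.log (uh p.1) + Real.log (vh p.2)) πopt := by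
    exact hintw1o.add hintw2o
  -- equality of the integrals of lam along πt and πopt
  have hmarg : ∫ p, (Real.log (uh p.1) + Real.log (vh p.2)) ∂πt
      = ∫ p, (Real.log (uh p.1) + Real.log (vh p.2)) ∂πopt := by
    rw [integral_add hintw1t hintw2t, integral_add hintw1o hintw2o]
    congr 1
    · calc ∫ p, Real.log (uh p.1) ∂πt
          = ∫ x, Real.log (uh x) ∂(πt.map Prod.fst) :=
            (integral_map measurable_fst.aemeasurable
              ((Real.measurable_log.comp huhm).aestronglyMeasurable)).symm
        _ = ∫ x, Real.log (uh x) ∂(πopt.map Prod.fst) := by rw [ht1, ho1]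
        _ = ∫ p, Real.log (uh p.1) ∂πopt :=
            integral_map measurable_fst.aemeasurable
              ((Real.measurable_log.comp huhm).aestronglyMeasurable)
    · calc ∫ p, Real.log (vh p.2) ∂πt
          = ∫ y, Real.log (vh y) ∂(πt.map Prod.snd) :=
            (integral_map measurable_snd.aemeasurable
              ((Real.measurable_log.comp hvhm).aestronglyMeasurable)).symm
        _ = ∫ y, Real.log (vh y) ∂(πopt.map Prod.snd) := by rw [ht2, ho2]
        _ = ∫ p, Real.log (vh p.2) ∂πopt :=
            integral_map measurable_snd.aemeasurable
              ((Real.measurable_log.comp hvhm).aestronglyMeasurable)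

  -- the null sets where uh or vh vanish
  have hSu : MeasurableSet {x : X | uh x = 0} := huhm (measurableSet_singleton 0)
  have hSv : MeasurableSet {y : Y | vh y = 0} := hvhm (measurableSet_singleton 0)
  have hπh1 : πh ({x : X | uh x = 0} ×ˢ (Set.univ : Set Y)) = 0 := by
    rw [hπh, withDensity_apply _ (hSu.prod MeasurableSet.univ)]
    rw [lintegral_eq_zero_iff hfEm, Filter.EventuallyEq,
      ae_restrict_iff' (hSu.prod MeasurableSet.univ)]
    refine Filter.Eventually.of_forall fun p hp => ?_
    have h0 : uh p.1 = 0 := hp.1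
    simp [prodDensity, h0]
  have hμ0 : μ {x : X | uh x = 0} = 0 := by
    rw [← ht1, Measure.map_apply measurable_fst hSu,
      show Prod.fst ⁻¹' {x : X | uh x = 0} = {x : X | uh x = 0} ×ˢ (Set.univ : Set Y) from
        (Set.prod_univ).symm]
    exact hth hπh1
  have hπh2 : πh ((Set.univ : Set X) ×ˢ {y : Y | vh y = 0}) = 0 := by
    rw [hπh, withDensity_apply _ (MeasurableSet.univ.prod hSv)]
    rw [lintegral_eq_zero_iff hfEm, Filter.EventuallyEq,
      ae_restrict_iff' (MeasurableSet.univ.prod hSv)]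
    refine Filter.Eventually.of_forall fun p hp => ?_
    have h0 : vh p.2 = 0 := hp.2
    simp [prodDensity, h0]
  have hν0 : ν {y : Y | vh y = 0} = 0 := by
    rw [← ht2, Measure.map_apply measurable_snd hSv,
      show Prod.snd ⁻¹' {y : Y | vh y = 0} = (Set.univ : Set X) ×ˢ {y : Y | vh y = 0} from
        (Set.univ_prod).symm]
    exact hth hπh2
  have hπoS : πopt ({x : X | uh x = 0} ×ˢ (Set.univ : Set Y)
      ∪ (Set.univ : Set X) ×ˢ {y : Y | vh y = 0}) = 0 := by
    refine measure_union_null ?_ ?_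
    · rw [Set.prod_univ, ← Measure.map_apply measurable_fst hSu, ho1]
      exact hμ0
    · rw [Set.univ_prod, ← Measure.map_apply measurable_snd hSv, ho2]
      exact hν0
  have h0S : ∀ᵐ p ∂K, p ∈ ({x : X | uh x = 0} ×ˢ (Set.univ : Set Y)
      ∪ (Set.univ : Set X) ×ˢ {y : Y | vh y = 0}) → πopt.rnDeriv K p = 0 := by
    have h1 : ∫⁻ p in ({x : X | uh x = 0} ×ˢ (Set.univ : Set Y)
        ∪ (Set.univ : Set X) ×ˢ {y : Y | vh y = 0}), πopt.rnDeriv K p ∂K = 0 := by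
      rw [Measure.setLIntegral_rnDeriv hoK]
      exact hπoS
    rw [lintegral_eq_zero_iff (Measure.measurable_rnDeriv _ _)] at h1
    exact (ae_restrict_iff'
      ((hSu.prod MeasurableSet.univ).union (MeasurableSet.univ.prod hSv))).mp h1
  -- the key pointwise inequality
  have hineq : ∀ᵐ p ∂K, (πopt.rnDeriv K p).toReal * (Real.log (uh p.1) + Real.log (vh p.2))
      ≤ phi ((πopt.rnDeriv K p).toReal) - 1 + uh p.1 * vh p.2 := by
    filter_upwards [hKu, hKv, h0S] with p h1 h2 h3
    rcases eq_or_lt_of_le (mul_nonneg h1.1 h2.1) with hfr | hfr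
    · have hpS : p ∈ ({x : X | uh x = 0} ×ˢ (Set.univ : Set Y)
          ∪ (Set.univ : Set X) ×ˢ {y : Y | vh y = 0}) := by
        rcases mul_eq_zero.mp hfr.symm with h | h
        · exact Or.inl ⟨h, Set.mem_univ _⟩
        · exact Or.inr ⟨Set.mem_univ _, h⟩
      rw [h3 hpS]
      simp [phi, ← hfr]
    · have hu0 : 0 < uh p.1 := by
        rcases h1.1.lt_or_eq with h | h
        · exact h
        · exfalso; rw [← h, zero_mul] at hfr; exact lt_irrefl _ hfr
      have hv0 : 0 < vh p.2 := by
        rcases h2.1.lt_or_eq with h | h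
        · exact h
        · exfalso; rw [← h, mul_zero] at hfr; exact lt_irrefl _ hfr
      rw [← Real.log_mul hu0.ne' hv0.ne']
      exact mul_log_le ENNReal.toReal_nonneg hfr
  -- the gap inequality
  have hintHlam : Integrable
      (fun p => (πopt.rnDeriv K p).toReal • (Real.log (uh p.1) + Real.log (vh p.2))) K :=
    (integrable_rnDeriv_smul_iff hoK).mpr hintlamo
  have hintD1 : Integrable (fun p => phi ((πopt.rnDeriv K p).toReal) - 1) K :=
    hintD.sub (integrable_const 1)
  have hintRHS : Integrable
      (fun p => phi ((πopt.rnDeriv K p).toReal) - 1 + uh p.1 * vh p.2) K := by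
    exact hintD1.add hintfr
  have hstep : ∫ p, (Real.log (uh p.1) + Real.log (vh p.2)) ∂πopt
      ≤ (∫ p, phi ((πopt.rnDeriv K p).toReal) ∂K) - (K Set.univ).toReal
        + ∫ p, (uh p.1 * vh p.2) ∂K :=
    calc ∫ p, (Real.log (uh p.1) + Real.log (vh p.2)) ∂πopt
        = ∫ p, (πopt.rnDeriv K p).toReal • (Real.log (uh p.1) + Real.log (vh p.2)) ∂K :=
          (integral_rnDeriv_smul hoK).symm
      _ ≤ ∫ p, (phi ((πopt.rnDeriv K p).toReal) - 1 + uh p.1 * vh p.2) ∂K := by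
          refine integral_mono_ae hintHlam hintRHS ?_
          filter_upwards [hineq] with p hp
          simpa [smul_eq_mul] using hp
      _ = (∫ p, phi ((πopt.rnDeriv K p).toReal) ∂K) - (K Set.univ).toReal
          + ∫ p, (uh p.1 * vh p.2) ∂K := by
          rw [integral_add hintD1 hintfr, integral_sub hintD (integrable_const 1),
            integral_const, smul_eq_mul, mul_one, measureReal_def]
  have hCval : ∫ p, (1 - uh p.1 * vh p.2) ∂K
      = (K Set.univ).toReal - ∫ p, (uh p.1 * vh p.2) ∂K := by
    rw [integral_sub (integrable_const 1) hintfr, integral_const, smul_eq_mul, mul_one, measureReal_def]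
  -- final assembly
  have hfinal : (∫ p, (uh p.1 * vh p.2) * phi ((πt.rnDeriv πh p).toReal) ∂K)
      + (∫ p, (πt.rnDeriv πh p).toReal * (uh p.1 * vh p.2) * Real.log (uh p.1 * vh p.2) ∂K)
      + (∫ p, (1 - uh p.1 * vh p.2) ∂K)
      ≤ (∫ p, (uh p.1 * vh p.2) * phi ((πt.rnDeriv πh p).toReal) ∂K)
      + (∫ p, phi ((πopt.rnDeriv K p).toReal) ∂K) := by
    have h1 := hBt
    rw [hmarg] at h1
    linarith [hstep, hCval, h1]
  rw [hABC, ← hofRealA, ← hofRealD, ← ENNReal.ofReal_add hA0 hD0]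
  exact ENNReal.ofReal_le_ofReal hfinal
end
end

section
/- (Validity of multi-scale refinement) With the discrete refinement setup, the measures ν_i⁰ defined by ν_i⁰({y}) := ν({y}) · ν̂_{Pa(i)}({pa(y)})/ν̂({pa(y)}) · μ(X_i)/μ̂(X̂_{Pa(i)}) satisfy Σ_{i∈I} ν_i⁰ = ν and ‖ν_i⁰‖ = μ(X_i) for every i ∈ I. -/
open MeasureTheory

noncomputable section

/-- Proposition 5.1, validity of multi-scale refinement: in the
discrete refinement setup, the refined basic cell marginals
`νᵢ⁰({y}) = ν({y})·ν̂_{Pa(i)}({pa(y)})/ν̂({pa(y)}) · μ(Xᵢ)/μ̂(X̂_{Pa(i)})`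
satisfy `Σᵢ νᵢ⁰ = ν` and `‖νᵢ⁰‖ = μ(Xᵢ)` for every `i`. -/
theorem refinement_valid
    {X Y Xh Yh : Type*} [Fintype X] [Fintype Y] [Fintype Xh] [Fintype Yh]
    [MeasurableSpace X] [MeasurableSpace Y] [MeasurableSpace Xh] [MeasurableSpace Yh]
    [MeasurableSingletonClass X] [MeasurableSingletonClass Y]
    [MeasurableSingletonClass Xh] [MeasurableSingletonClass Yh]
    (pa : X → Xh) (paY : Y → Yh) (hpa : Measurable pa) (hpaY : Measurable paY)
    (μ : Measure X) (ν : Measure Y) [IsFiniteMeasure μ] [IsFiniteMeasure ν]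
    {ιf ιc : Type*} [Fintype ιf] [Fintype ιc]
    (Xp : ιf → Set X) (hXpd : ∀ i j, i ≠ j → Disjoint (Xp i) (Xp j))
    (hXpu : (⋃ i, Xp i) = Set.univ) (hXppos : ∀ i, 0 < μ (Xp i))
    (Xhp : ιc → Set Xh) (hXhpd : ∀ j j', j ≠ j' → Disjoint (Xhp j) (Xhp j'))
    (hXhpu : (⋃ j, Xhp j) = Set.univ) (hXhppos : ∀ j, 0 < (μ.map pa) (Xhp j))
    (Pa : ιf → ιc) (hPa : ∀ i, ∀ x ∈ Xp i, pa x ∈ Xhp (Pa i))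
    (νhat : ιc → Measure Yh)
    (hνhatsum : (∑ j, νhat j) = ν.map paY)
    (hνhatmass : ∀ j, νhat j Set.univ = (μ.map pa) (Xhp j))
    (νi0 : ιf → Measure Y)
    (hνi0 : ∀ i (y : Y), νi0 i {y} =
      ν {y} * νhat (Pa i) {paY y} / (ν.map paY) {paY y} *
        μ (Xp i) / (μ.map pa) (Xhp (Pa i))) :
    (∑ i, νi0 i) = ν ∧ ∀ i, νi0 i Set.univ = μ (Xp i) := by
  classical
  have mX : ∀ s : Set X, MeasurableSet s := fun s => s.toFinite.measurableSet
  have mY : ∀ s : Set Y, MeasurableSet s := fun s => s.toFinite.measurableSet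
  have mXh : ∀ s : Set Xh, MeasurableSet s := fun s => s.toFinite.measurableSet
  have mYh : ∀ s : Set Yh, MeasurableSet s := fun s => s.toFinite.measurableSet
  -- finiteness facts
  have hμh_fin : ∀ j, (μ.map pa) (Xhp j) ≠ ⊤ := fun j => by
    rw [Measure.map_apply hpa (mXh _)]; exact measure_ne_top μ _
  have hνh_fin : ∀ yh : Yh, (ν.map paY) {yh} ≠ ⊤ := fun yh => by
    rw [Measure.map_apply hpaY (mYh _)]; exact measure_ne_top ν _
  -- each partial coarse marginal is dominated by the full coarse marginal
  have hB : ∀ j (yh : Yh), νhat j {yh} ≤ (ν.map paY) {yh} := by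
    intro j yh
    rw [← hνhatsum, Measure.finset_sum_apply]
    exact Finset.single_le_sum (f := fun j' => νhat j' {yh}) (fun _ _ => zero_le) (Finset.mem_univ j)
  -- ν {y} ≤ ν̂ {paY y}
  have hC : ∀ y : Y, ν {y} ≤ (ν.map paY) {paY y} := by
    intro y
    rw [Measure.map_apply hpaY (mYh _)]
    exact measure_mono (Set.singleton_subset_iff.2 (by simp))
  -- fiber sums of fine masses equal coarse masses
  have hA : ∀ j, (∑ i ∈ Finset.univ.filter (fun i => Pa i = j), μ (Xp i))
      = (μ.map pa) (Xhp j) := by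
    intro j
    have hinter : ∀ i, Xp i ∩ pa ⁻¹' (Xhp j) = if Pa i = j then Xp i else ∅ := by
      intro i
      split_ifs with h
      · subst h
        exact Set.inter_eq_left.2 (fun x hx => hPa i x hx)
      · ext x
        simp only [Set.mem_inter_iff, Set.mem_preimage, Set.mem_empty_iff_false, iff_false,
          not_and]
        intro hx1 hx2
        exact (hXhpd _ _ h).ne_of_mem (hPa i x hx1) hx2 rfl
    have hcover : pa ⁻¹' (Xhp j) = ⋃ i, (Xp i ∩ pa ⁻¹' (Xhp j)) := by
      rw [← Set.iUnion_inter, hXpu, Set.univ_inter]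
    rw [Measure.map_apply hpa (mXh _), hcover,
      measure_iUnion (fun a b hab => ((hXpd a b hab).mono
        Set.inter_subset_left Set.inter_subset_left)) (fun i => mX _),
      tsum_fintype]
    simp_rw [hinter]
    rw [Finset.sum_filter]
    exact Finset.sum_congr rfl (fun i _ => by split_ifs <;> simp
      )
  -- sums of singleton masses give total masses
  have hsingY : ∀ (m : Measure Y), (∑ y : Y, m {y}) = m Set.univ := by
    intro m
    have := sum_measure_preimage_singleton (μ := m) (Finset.univ : Finset Y) (f := id)
      (fun _ _ => mY _)
    simpa using this
  have hsingYh : ∀ (m : Measure Yh), (∑ yh : Yh, m {yh}) = m Set.univ := by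
    intro m
    have := sum_measure_preimage_singleton (μ := m) (Finset.univ : Finset Yh) (f := id)
      (fun _ _ => mYh _)
    simpa using this
  -- fiber sums of ν singletons
  have hfib : ∀ yh : Yh, (∑ y ∈ Finset.univ.filter (fun y => paY y = yh), ν {y})
      = (ν.map paY) {yh} := by
    intro yh
    have hset : (↑(Finset.univ.filter (fun y => paY y = yh)) : Set Y) = paY ⁻¹' {yh} := by
      ext y; simp [Finset.mem_filter]
    have := sum_measure_preimage_singleton (μ := ν)
      (Finset.univ.filter (fun y => paY y = yh)) (f := id) (fun _ _ => mY _)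
    simp only [Set.preimage_id, id_eq] at this
    rw [this, hset, Measure.map_apply hpaY (mYh _)]
  constructor
  · -- the refined marginals sum to ν
    rw [MeasureTheory.Measure.ext_iff_singleton]
    intro y
    rw [Measure.finset_sum_apply]
    simp_rw [hνi0]
    by_cases hy : (ν.map paY) {paY y} = 0
    · have hνy : ν {y} = 0 := le_antisymm (hy ▸ hC y) (zero_le)
      simp [hνy]
    · have key : ∀ i, ν {y} * νhat (Pa i) {paY y} / (ν.map paY) {paY y} *
            μ (Xp i) / (μ.map pa) (Xhp (Pa i))
          = ν {y} / (ν.map paY) {paY y} *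
            (νhat (Pa i) {paY y} * (μ (Xp i) * ((μ.map pa) (Xhp (Pa i)))⁻¹)) := by
        intro i
        simp only [div_eq_mul_inv]
        ring
      simp_rw [key]
      rw [← Finset.mul_sum,
        ← Finset.sum_fiberwise (Finset.univ : Finset ιf) Pa
          (fun i => νhat (Pa i) {paY y} * (μ (Xp i) * ((μ.map pa) (Xhp (Pa i)))⁻¹))]
      have inner : ∀ j, (∑ i ∈ Finset.univ.filter (fun i => Pa i = j),
          νhat (Pa i) {paY y} * (μ (Xp i) * ((μ.map pa) (Xhp (Pa i)))⁻¹))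
          = νhat j {paY y} := by
        intro j
        rw [Finset.sum_congr rfl (fun i hi => by
          rw [(Finset.mem_filter.1 hi).2])]
        rw [← Finset.mul_sum, ← Finset.sum_mul, hA j, ← div_eq_mul_inv,
          ENNReal.div_self (hXhppos j).ne' (hμh_fin j), mul_one]
      simp_rw [inner]
      have : (∑ j, νhat j {paY y}) = (ν.map paY) {paY y} := by
        rw [← hνhatsum, Measure.finset_sum_apply]
      rw [this, mul_comm, ENNReal.mul_div_cancel hy (hνh_fin _)]
  · -- each refined marginal has the correct total mass
    intro i
    rw [← hsingY (νi0 i)]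
    simp_rw [hνi0 i]
    have key : ∀ y : Y, ν {y} * νhat (Pa i) {paY y} / (ν.map paY) {paY y} *
          μ (Xp i) / (μ.map pa) (Xhp (Pa i))
        = ν {y} * (νhat (Pa i) {paY y} / (ν.map paY) {paY y}) *
          (μ (Xp i) / (μ.map pa) (Xhp (Pa i))) := by
      intro y
      simp only [div_eq_mul_inv]
      ring
    simp_rw [key]
    rw [← Finset.sum_mul,
      ← Finset.sum_fiberwise (Finset.univ : Finset Y) paY
        (fun y => ν {y} * (νhat (Pa i) {paY y} / (ν.map paY) {paY y}))]
    have inner : ∀ yh : Yh, (∑ y ∈ Finset.univ.filter (fun y => paY y = yh),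
        ν {y} * (νhat (Pa i) {paY y} / (ν.map paY) {paY y}))
        = νhat (Pa i) {yh} := by
      intro yh
      rw [Finset.sum_congr rfl (fun y hy => by
        rw [(Finset.mem_filter.1 hy).2])]
      rw [← Finset.sum_mul, hfib yh]
      by_cases h0 : (ν.map paY) {yh} = 0
      · have : νhat (Pa i) {yh} = 0 := le_antisymm (h0 ▸ hB (Pa i) yh) (zero_le)
        simp [h0, this]
      · exact ENNReal.mul_div_cancel h0 (hνh_fin yh)
    simp_rw [inner]
    rw [hsingYh (νhat (Pa i)), hνhatmass (Pa i),
      ENNReal.mul_div_cancel (hXhppos (Pa i)).ne' (hμh_fin (Pa i))]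

end
end
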